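/- Under the model assumptions — reward r bounded by M_R and L_R-Lipschitz in (μ,ν), transition kernel P L_P-Lipschitz in (μ,ν), and all policies in the admissible class L_Q-Lipschitz in μ — let π* and π̄ be two policy sequences in the admissible class that induce identical mean-field flows (μ_t^∞, action choices) in the infinite-agent system (e.g. π̄ is a localization of π*). Then for γ with γS_P < 1, the N-agent discounted value v_MARL(x₀^N, π̄) with initial empirical distribution μ₀ satisfies |v_MARL(x₀^N, π̄) − v_MF(μ₀, π*)| ≤ (1/(1−γ))(M_R + L_R√(|U|))/√N + ((√(|X|)+√(|U|))/√N) · (S_R C_P/(S_P−1)) · (1/(1−γS_P) − 1/(1−γ)), where C_P = 2+L_P, S_R = (M_R+2L_R)+L_Q(M_R+L_R), S_P = (1+2L_P)+L_Q(1+L_P). -/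

import Mathlib

open Finset

def IsPmf {X : Type*} [Fintype X] (μ : X → ℝ) : Prop :=
  (∀ x, 0 ≤ μ x) ∧ ∑ x, μ x = 1

noncomputable def l1 {X : Type*} [Fintype X] (f : X → ℝ) : ℝ := ∑ x, |f x|

/-- Empirical distribution of a configuration of `N` agents. -/
noncomputable def emp {X : Type*} [Fintype X] [DecidableEq X] {N : ℕ}
    (s : Fin N → X) : X → ℝ :=
  fun x => (∑ i, if s i = x then (1 : ℝ) else 0) / N

/-- The mean-field action distribution `ν^MF(μ, π)`. -/
noncomputable def nuMF {X U : Type*} [Fintype X] [Fintype U]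
    (μ : X → ℝ) (π : X → (X → ℝ) → U → ℝ) : U → ℝ :=
  fun u => ∑ x, π x μ u * μ x

/-- The one-step mean-field state distribution update `P^MF(μ, π)`. -/
noncomputable def PMF' {X U : Type*} [Fintype X] [Fintype U]
    (P : X → U → (X → ℝ) → (U → ℝ) → X → ℝ)
    (μ : X → ℝ) (π : X → (X → ℝ) → U → ℝ) : X → ℝ :=
  fun y => ∑ x, ∑ u, P x u μ (nuMF μ π) y * π x μ u * μ x

/-- The mean-field average reward `r^MF(μ, π)`. -/
noncomputable def rMF {X U : Type*} [Fintype X] [Fintype U]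
    (r : X → U → (X → ℝ) → (U → ℝ) → ℝ)
    (μ : X → ℝ) (π : X → (X → ℝ) → U → ℝ) : ℝ :=
  ∑ x, ∑ u, r x u μ (nuMF μ π) * π x μ u * μ x

/-- Law of the `N`-agent joint-state process at time `t`, started from the deterministic
joint state `x₀`. -/
noncomputable def Wproc {X U : Type*} [Fintype X] [Fintype U] [DecidableEq X] [DecidableEq U]
    {N : ℕ} (P : X → U → (X → ℝ) → (U → ℝ) → X → ℝ)
    (π : ℕ → X → (X → ℝ) → U → ℝ) (x₀ : Fin N → X) : ℕ → (Fin N → X) → ℝ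
  | 0 => fun s => if s = x₀ then 1 else 0
  | t + 1 => fun s' => ∑ s : Fin N → X, Wproc P π x₀ t s *
      ∑ a : Fin N → U, (∏ i, π t (s i) (emp s) (a i)) *
        ∏ i, P (s i) (a i) (emp s) (emp a) (s' i)

/-- The `N`-agent discounted value `v_MARL(x₀, π)`: expected discounted sum of the
population-average reward under the `N`-agent dynamics driven by `π`. -/
noncomputable def vMARL {X U : Type*} [Fintype X] [Fintype U] [DecidableEq X] [DecidableEq U]
    {N : ℕ} (γ : ℝ) (r : X → U → (X → ℝ) → (U → ℝ) → ℝ)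
    (P : X → U → (X → ℝ) → (U → ℝ) → X → ℝ)
    (π : ℕ → X → (X → ℝ) → U → ℝ) (x₀ : Fin N → X) : ℝ :=
  ∑' t : ℕ, γ ^ t * ∑ s : Fin N → X, Wproc P π x₀ t s *
    ∑ a : Fin N → U, (∏ i, π t (s i) (emp s) (a i)) *
      ((1 / N : ℝ) * ∑ i, r (s i) (a i) (emp s) (emp a))

/-- Deterministic mean-field flow of state distributions. -/
noncomputable def muFlow {X U : Type*} [Fintype X] [Fintype U]
    (P : X → U → (X → ℝ) → (U → ℝ) → X → ℝ)
    (π : ℕ → X → (X → ℝ) → U → ℝ) (μ₀ : X → ℝ) : ℕ → X → ℝ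
  | 0 => μ₀
  | t + 1 => PMF' P (muFlow P π μ₀ t) (π t)

/-- The mean-field discounted value `v_MF(μ₀, π)`. -/
noncomputable def vMF {X U : Type*} [Fintype X] [Fintype U]
    (γ : ℝ) (r : X → U → (X → ℝ) → (U → ℝ) → ℝ)
    (P : X → U → (X → ℝ) → (U → ℝ) → X → ℝ)
    (π : ℕ → X → (X → ℝ) → U → ℝ) (μ₀ : X → ℝ) : ℝ :=
  ∑' t : ℕ, γ ^ t * rMF r (muFlow P π μ₀ t) (π t)

section infra

variable {X : Type*} [Fintype X]

lemma l1_nonneg (f : X → ℝ) : 0 ≤ l1 f :=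
  Finset.sum_nonneg fun _ _ => abs_nonneg _

lemma l1_triangle (f g k : X → ℝ) :
    l1 (fun x => f x - k x) ≤ l1 (fun x => f x - g x) + l1 (fun x => g x - k x) := by
  unfold l1
  rw [← Finset.sum_add_distrib]
  apply Finset.sum_le_sum
  intro x _
  simp only []
  have : f x - k x = (f x - g x) + (g x - k x) := by ring
  rw [this]
  exact abs_add_le _ _

lemma isPmf_emp [DecidableEq X] {N : ℕ} (hN : 0 < N) (s : Fin N → X) : IsPmf (emp s) := by
  constructor
  · intro x
    apply div_nonneg _ (Nat.cast_nonneg N)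
    exact Finset.sum_nonneg fun _ _ => by positivity
  · unfold emp
    rw [← Finset.sum_div, Finset.sum_comm]
    have : ∀ i : Fin N, ∑ x : X, (if s i = x then (1:ℝ) else 0) = 1 := by
      intro i; simp
    rw [Finset.sum_congr rfl fun i _ => this i]
    simp [Finset.sum_const]
    omega

lemma emp_integral [DecidableEq X] {N : ℕ} (s : Fin N → X) (h : X → ℝ) :
    ∑ x, emp s x * h x = (∑ i, h (s i)) / N := by
  unfold emp
  have : ∀ x : X, (∑ i, if s i = x then (1:ℝ) else 0) / N * h x
      = (∑ i, if s i = x then h x else 0) / N := by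
    intro x
    rw [div_mul_eq_mul_div, Finset.sum_mul]
    congr 1; apply Finset.sum_congr rfl; intro i _
    split <;> simp
  rw [Finset.sum_congr rfl fun x _ => this x, ← Finset.sum_div]
  congr 1
  rw [Finset.sum_comm]
  apply Finset.sum_congr rfl; intro i _
  have : ∀ x : X, (if s i = x then h x else 0) = (if x = s i then h x else 0) := by
    intro x; by_cases hx : x = s i <;> simp [hx, eq_comm]
  rw [Finset.sum_congr rfl fun x _ => this x, Finset.sum_ite_eq' Finset.univ (s i) h]
  simp

end infra

section prodmeas
variable {ι κ : Type*} [Fintype ι] [DecidableEq ι] [Fintype κ]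

lemma sum_pi_prod (q : ι → κ → ℝ) (hq : ∀ i, ∑ v, q i v = 1) :
    ∑ a : ι → κ, ∏ i, q i (a i) = 1 := by
  have := Finset.prod_univ_sum (fun _ : ι => (Finset.univ : Finset κ)) (fun i v => q i v)
  rw [Fintype.piFinset_univ] at this
  rw [← this]
  simp [hq]

lemma sum_pi_prod_mul (q : ι → κ → ℝ) (hq : ∀ i, ∑ v, q i v = 1) (i₀ : ι) (F : κ → ℝ) :
    ∑ a : ι → κ, (∏ i, q i (a i)) * F (a i₀) = ∑ v, q i₀ v * F v := by
  have key : ∀ a : ι → κ, (∏ i, q i (a i)) * F (a i₀)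
      = ∏ i, (q i (a i) * (if i = i₀ then F (a i) else 1)) := by
    intro a
    rw [Finset.prod_mul_distrib, Finset.prod_ite_eq' Finset.univ i₀ (fun i => F (a i))]
    simp
  rw [Finset.sum_congr rfl fun a _ => key a]
  have := Finset.prod_univ_sum (fun _ : ι => (Finset.univ : Finset κ))
    (fun i v => q i v * (if i = i₀ then F v else 1))
  rw [Fintype.piFinset_univ] at this
  rw [← this]
  rw [Finset.prod_eq_single i₀]
  · simp
  · intro i _ hi; simp [hi, hq i]
  · simp

lemma sum_pi_prod_mul₂ (q : ι → κ → ℝ) (hq : ∀ i, ∑ v, q i v = 1) {i₀ j₀ : ι}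
    (hij : i₀ ≠ j₀) (F G : κ → ℝ) :
    ∑ a : ι → κ, (∏ i, q i (a i)) * (F (a i₀) * G (a j₀))
      = (∑ v, q i₀ v * F v) * (∑ v, q j₀ v * G v) := by
  have key : ∀ a : ι → κ, (∏ i, q i (a i)) * (F (a i₀) * G (a j₀))
      = ∏ i, (q i (a i) * (if i = i₀ then F (a i) else if i = j₀ then G (a i) else 1)) := by
    intro a
    rw [Finset.prod_mul_distrib]
    congr 1
    rw [← Finset.mul_prod_erase Finset.univ _ (Finset.mem_univ i₀)]
    simp only [if_pos rfl]
    congr 1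
    have hj : j₀ ∈ Finset.univ.erase i₀ := by simp [hij.symm]
    rw [← Finset.mul_prod_erase _ _ hj]
    rw [if_neg (Ne.symm hij), if_pos rfl]
    have : ∀ i ∈ (Finset.univ.erase i₀).erase j₀,
        (if i = i₀ then F (a i) else if i = j₀ then G (a i) else 1) = 1 := by
      intro i hi
      simp only [Finset.mem_erase] at hi
      rw [if_neg hi.2.1, if_neg hi.1]
    rw [Finset.prod_congr rfl this]
    simp
  rw [Finset.sum_congr rfl fun a _ => key a]
  have := Finset.prod_univ_sum (fun _ : ι => (Finset.univ : Finset κ))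
    (fun i v => q i v * (if i = i₀ then F v else if i = j₀ then G v else 1))
  rw [Fintype.piFinset_univ] at this
  rw [← this]
  rw [← Finset.mul_prod_erase Finset.univ _ (Finset.mem_univ i₀)]
  have hj : j₀ ∈ Finset.univ.erase i₀ := by simp [hij.symm]
  rw [← Finset.mul_prod_erase _ _ hj]
  have h1 : ∀ i ∈ (Finset.univ.erase i₀).erase j₀,
      (∑ v, q i v * (if i = i₀ then F v else if i = j₀ then G v else 1)) = 1 := by
    intro i hi
    simp only [Finset.mem_erase] at hi
    simp [hi.1, hi.2.1, hq i]
  rw [Finset.prod_congr rfl h1]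
  simp [Ne.symm hij]

end prodmeas

lemma expect_abs_le_sqrt {A : Type*} [Fintype A] (w z : A → ℝ)
    (hw : ∀ a, 0 ≤ w a) (hw1 : ∑ a, w a = 1) :
    ∑ a, w a * |z a| ≤ Real.sqrt (∑ a, w a * z a ^ 2) := by
  have h := sum_mul_sq_le_sq_mul_sq Finset.univ (fun a => Real.sqrt (w a))
    (fun a => Real.sqrt (w a) * |z a|)
  have e1 : ∀ a : A, Real.sqrt (w a) * (Real.sqrt (w a) * |z a|) = w a * |z a| := by
    intro a; rw [← mul_assoc, Real.mul_self_sqrt (hw a)]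
  have e2 : ∀ a : A, Real.sqrt (w a) ^ 2 = w a := fun a => Real.sq_sqrt (hw a)
  have e3 : ∀ a : A, (Real.sqrt (w a) * |z a|) ^ 2 = w a * z a ^ 2 := by
    intro a; rw [mul_pow, e2 a, sq_abs]
  rw [Finset.sum_congr rfl fun a _ => e1 a] at h
  rw [Finset.sum_congr rfl fun a _ => e2 a] at h
  rw [Finset.sum_congr rfl fun a _ => e3 a] at h
  rw [hw1, one_mul] at h
  have hnn : 0 ≤ ∑ a, w a * |z a| :=
    Finset.sum_nonneg fun a _ => mul_nonneg (hw a) (abs_nonneg _)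
  nlinarith [Real.sq_sqrt (Finset.sum_nonneg fun a (_ : a ∈ Finset.univ) =>
    mul_nonneg (hw a) (sq_nonneg (z a))), Real.sqrt_nonneg (∑ a, w a * z a ^ 2)]

lemma sum_sqrt_le {Y : Type*} [Fintype Y] (m : Y → ℝ) (hm : ∀ y, 0 ≤ m y) :
    ∑ y, Real.sqrt (m y) ≤ Real.sqrt (Fintype.card Y) * Real.sqrt (∑ y, m y) := by
  have h := sum_mul_sq_le_sq_mul_sq Finset.univ (fun _ : Y => (1:ℝ)) (fun y => Real.sqrt (m y))
  simp only [one_mul, one_pow, Finset.sum_const, Finset.card_univ, nsmul_eq_mul, mul_one] at h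
  rw [Finset.sum_congr rfl fun y _ => Real.sq_sqrt (hm y)] at h
  have hnn : 0 ≤ ∑ y, Real.sqrt (m y) := Finset.sum_nonneg fun y _ => Real.sqrt_nonneg _
  have := Real.sqrt_le_sqrt h
  rwa [Real.sqrt_sq hnn, Real.sqrt_mul (Nat.cast_nonneg _)] at this
lemma sampling {κ Y : Type*} [Fintype κ] [Fintype Y] {N : ℕ} (hN : 0 < N)
    (q : Fin N → κ → ℝ) (hq : ∀ i, IsPmf (q i))
    (g : Fin N → κ → Y → ℝ) (hg : ∀ i v, IsPmf (g i v)) :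
    ∑ a : Fin N → κ, (∏ i, q i (a i)) *
      ∑ y, |(∑ i, g i (a i) y) / N - (∑ i, ∑ v, q i v * g i v y) / N|
      ≤ Real.sqrt (Fintype.card Y) / Real.sqrt N := by
  classical
  set w : (Fin N → κ) → ℝ := fun a => ∏ i, q i (a i) with hw_def
  have hq1 : ∀ i, ∑ v, q i v = 1 := fun i => (hq i).2
  have hwnn : ∀ a, 0 ≤ w a := fun a => Finset.prod_nonneg fun i _ => (hq i).1 _
  have hw1 : ∑ a, w a = 1 := sum_pi_prod q hq1
  set p : Fin N → Y → ℝ := fun i y => ∑ v, q i v * g i v y with hp_def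
  have hpnn : ∀ i y, 0 ≤ p i y :=
    fun i y => Finset.sum_nonneg fun v _ => mul_nonneg ((hq i).1 v) ((hg i v).1 y)
  set Z : Y → (Fin N → κ) → ℝ := fun y a => (∑ i, g i (a i) y) / N - (∑ i, p i y) / N
    with hZ_def
  -- swap sums
  have swap : ∑ a, w a * ∑ y, |Z y a| = ∑ y, ∑ a, w a * |Z y a| := by
    rw [Finset.sum_comm' ]
    · apply Finset.sum_congr rfl; intro a _; rw [Finset.mul_sum]
    · simp
  rw [swap]
  -- per-y second moment bound
  have var_bound : ∀ y, ∑ a, w a * (Z y a) ^ 2 ≤ (∑ i, p i y) / N ^ 2 := by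
    intro y
    have hZsq : ∀ a, (Z y a) ^ 2
        = (∑ i, ∑ j, (g i (a i) y - p i y) * (g j (a j) y - p j y)) / (N : ℝ) ^ 2 := by
      intro a
      have : Z y a = (∑ i, (g i (a i) y - p i y)) / N := by
        simp only [hZ_def, Finset.sum_sub_distrib, sub_div]
      rw [this, div_pow, sq]
      rw [Finset.sum_mul_sum]
    set d : Fin N → (Fin N → κ) → ℝ := fun i a => g i (a i) y - p i y with hd_def
    have key : ∑ a, w a * (Z y a) ^ 2
        = (∑ i, ∑ j, ∑ a, w a * (d i a * d j a)) / (N:ℝ)^2 := by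
      have e1 : ∀ a, w a * (Z y a) ^ 2
          = (∑ i, ∑ j, w a * (d i a * d j a)) / (N:ℝ)^2 := by
        intro a
        rw [hZsq a, ← mul_div_assoc]
        congr 1
        rw [Finset.mul_sum]
        exact Finset.sum_congr rfl fun i _ => by rw [Finset.mul_sum]
      rw [Finset.sum_congr rfl fun a _ => e1 a, ← Finset.sum_div]
      congr 1
      rw [Finset.sum_comm]
      exact Finset.sum_congr rfl fun i _ => Finset.sum_comm
    -- cross terms vanish, diagonal bounded
    have inner_bound : ∀ i : Fin N, ∑ j, ∑ a, w a * (d i a * d j a) ≤ p i y := by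
      intro i
      have mean_zero : ∀ k : Fin N, ∑ v, q k v * (g k v y - p k y) = 0 := by
        intro k
        rw [Finset.sum_congr rfl fun v _ => mul_sub (q k v) _ _,
          Finset.sum_sub_distrib, ← Finset.sum_mul, hq1 k, one_mul]
        simp [hp_def]
      have cross : ∀ j, j ≠ i → ∑ a, w a * (d i a * d j a) = 0 := by
        intro j hj
        have := sum_pi_prod_mul₂ q hq1 (Ne.symm hj)
          (fun v => g i v y - p i y) (fun v => g j v y - p j y)
        simp only [hd_def]
        rw [this, mean_zero i, zero_mul]
      have diag : ∑ a, w a * (d i a * d i a) ≤ p i y := by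
        have := sum_pi_prod_mul q hq1 i (fun v => (g i v y - p i y)^2)
        have e : ∑ a, w a * (d i a * d i a) = ∑ v, q i v * (g i v y - p i y)^2 := by
          rw [← this]
          exact Finset.sum_congr rfl fun a _ => by rw [hd_def, hw_def]; ring_nf
        rw [e]
        have hgle : ∀ v, g i v y ≤ 1 := by
          intro v
          calc g i v y ≤ ∑ y', g i v y' :=
            Finset.single_le_sum (fun y' _ => (hg i v).1 y') (Finset.mem_univ y)
          _ = 1 := (hg i v).2
        have expand : ∑ v, q i v * (g i v y - p i y)^2
            = (∑ v, q i v * (g i v y)^2) - (p i y)^2 := by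
          have e2 : ∀ v, q i v * (g i v y - p i y)^2
              = q i v * (g i v y)^2 - 2 * p i y * (q i v * g i v y) + (p i y)^2 * q i v := by
            intro v; ring
          rw [Finset.sum_congr rfl fun v _ => e2 v, Finset.sum_add_distrib,
            Finset.sum_sub_distrib, ← Finset.mul_sum, ← Finset.mul_sum, hq1 i]
          have : ∑ v, q i v * g i v y = p i y := by simp [hp_def]
          rw [this]; ring
        calc ∑ v, q i v * (g i v y - p i y)^2
            = (∑ v, q i v * (g i v y)^2) - (p i y)^2 := expand
          _ ≤ (∑ v, q i v * g i v y) - 0 := by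
              apply sub_le_sub _ (sq_nonneg _)
              apply Finset.sum_le_sum
              intro v _
              have h0 := (hg i v).1 y
              nlinarith [mul_nonneg (mul_nonneg ((hq i).1 v) h0) (sub_nonneg.mpr (hgle v))]
          _ = p i y := by simp [hp_def]
      calc ∑ j, ∑ a, w a * (d i a * d j a)
          = ∑ a, w a * (d i a * d i a) := by
            apply Finset.sum_eq_single i
            · intro j _ hj; exact cross j hj
            · intro h; exact absurd (Finset.mem_univ i) h
        _ ≤ p i y := diag
    calc ∑ a, w a * (Z y a)^2 ≤ (∑ i, p i y) / (N:ℝ)^2 := by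
          rw [key]
          apply div_le_div_of_nonneg_right ?_ (by positivity)
          exact Finset.sum_le_sum fun i _ => inner_bound i
      _ = (∑ i, p i y) / N ^ 2 := by norm_num
  have hsum_m : ∑ y, ∑ i, p i y = (N : ℝ) := by
    rw [Finset.sum_comm]
    have e : ∀ i : Fin N, ∑ y, p i y = 1 := by
      intro i
      simp only [hp_def]
      rw [Finset.sum_comm]
      have : ∀ v, ∑ y, q i v * g i v y = q i v := by
        intro v; rw [← Finset.mul_sum, (hg i v).2, mul_one]
      rw [Finset.sum_congr rfl fun v _ => this v, hq1 i]
    rw [Finset.sum_congr rfl fun i _ => e i]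
    simp
  have hNpos : (0:ℝ) < N := Nat.cast_pos.mpr hN
  calc ∑ y, ∑ a, w a * |Z y a|
      ≤ ∑ y, Real.sqrt ((∑ i, p i y) / N ^ 2) := by
        apply Finset.sum_le_sum
        intro y _
        exact (expect_abs_le_sqrt w (Z y) hwnn hw1).trans (Real.sqrt_le_sqrt (var_bound y))
    _ = ∑ y, Real.sqrt (∑ i, p i y) / N := by
        apply Finset.sum_congr rfl
        intro y _
        rw [Real.sqrt_div (Finset.sum_nonneg fun i _ => hpnn i y)]
        congr 1
        rw [Real.sqrt_sq hNpos.le]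
    _ = (∑ y, Real.sqrt (∑ i, p i y)) / N := by rw [Finset.sum_div]
    _ ≤ (Real.sqrt (Fintype.card Y) * Real.sqrt (∑ y, ∑ i, p i y)) / N := by
        apply div_le_div_of_nonneg_right ?_ (by positivity)
        exact sum_sqrt_le _ fun y => Finset.sum_nonneg fun i _ => hpnn i y
    _ = Real.sqrt (Fintype.card Y) * (Real.sqrt N / N) := by rw [hsum_m, mul_div_assoc]
    _ = Real.sqrt (Fintype.card Y) / Real.sqrt N := by
        rw [Real.sqrt_div_self', mul_one_div]

lemma fn_sampling {κ Y : Type*} [Fintype κ] [Fintype Y] {N : ℕ} (hN : 0 < N)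
    (q : Fin N → κ → ℝ) (hq : ∀ i, IsPmf (q i))
    (g : Fin N → κ → Y → ℝ) (hg : ∀ i v, IsPmf (g i v)) :
    ∑ a : Fin N → κ, (∏ i, q i (a i)) *
      l1 (fun y => (∑ i, g i (a i) y) / N - (∑ i, ∑ v, q i v * g i v y) / N)
      ≤ Real.sqrt (Fintype.card Y) / Real.sqrt N := by
  simpa only [l1] using sampling hN q hq g hg

lemma emp_sampling {U : Type*} [Fintype U] [DecidableEq U] {N : ℕ} (hN : 0 < N)
    (q : Fin N → U → ℝ) (hq : ∀ i, IsPmf (q i)) :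
    ∑ a : Fin N → U, (∏ i, q i (a i)) * l1 (fun u => emp a u - (∑ i, q i u) / N)
      ≤ Real.sqrt (Fintype.card U) / Real.sqrt N := by
  have hg : ∀ (i : Fin N) (v : U), IsPmf (fun u => if v = u then (1:ℝ) else 0) := by
    intro i v
    constructor
    · intro u; dsimp only; split <;> norm_num
    · simp
  have h := fn_sampling hN q hq (fun i v u => if v = u then (1:ℝ) else 0) hg
  refine le_trans (le_of_eq ?_) h
  apply Finset.sum_congr rfl; intro a _
  congr 1
  unfold l1 emp
  apply Finset.sum_congr rfl; intro u _
  simp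
section model
set_option linter.unusedSectionVars false
variable {X U : Type*} [Fintype X] [Fintype U] [DecidableEq X] [DecidableEq U]

lemma isPmf_nuMF {μ : X → ℝ} {π : X → (X → ℝ) → U → ℝ} (hμ : IsPmf μ)
    (hπ : ∀ x, IsPmf (π x μ)) : IsPmf (nuMF μ π) := by
  constructor
  · intro u
    exact Finset.sum_nonneg fun x _ => mul_nonneg ((hπ x).1 u) (hμ.1 x)
  · unfold nuMF
    rw [Finset.sum_comm]
    have : ∀ x : X, ∑ u, π x μ u * μ x = μ x := by
      intro x; rw [← Finset.sum_mul, (hπ x).2, one_mul]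
    rw [Finset.sum_congr rfl fun x _ => this x, hμ.2]

lemma isPmf_PMF' {P : X → U → (X → ℝ) → (U → ℝ) → X → ℝ}
    {μ : X → ℝ} {π : X → (X → ℝ) → U → ℝ} (hμ : IsPmf μ)
    (hπ : ∀ x, IsPmf (π x μ))
    (hP : ∀ x u, IsPmf (P x u μ (nuMF μ π))) : IsPmf (PMF' P μ π) := by
  constructor
  · intro y
    apply Finset.sum_nonneg; intro x _
    apply Finset.sum_nonneg; intro u _
    exact mul_nonneg (mul_nonneg ((hP x u).1 y) ((hπ x).1 u)) (hμ.1 x)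
  · unfold PMF'
    rw [Finset.sum_comm]
    have e1 : ∀ x : X, ∑ y, ∑ u, P x u μ (nuMF μ π) y * π x μ u * μ x = μ x := by
      intro x
      rw [Finset.sum_comm]
      have : ∀ u : U, ∑ y, P x u μ (nuMF μ π) y * π x μ u * μ x
          = π x μ u * μ x := by
        intro u
        rw [← Finset.sum_mul, ← Finset.sum_mul, (hP x u).2, one_mul]
      rw [Finset.sum_congr rfl fun u _ => this u, ← Finset.sum_mul, (hπ x).2, one_mul]
    rw [Finset.sum_congr rfl fun x _ => e1 x, hμ.2]

variable {N : ℕ}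

lemma Wproc_nonneg {P : X → U → (X → ℝ) → (U → ℝ) → X → ℝ}
    {π : ℕ → X → (X → ℝ) → U → ℝ} {x₀ : Fin N → X}
    (hN : 0 < N)
    (hP : ∀ x u μ ν, IsPmf μ → IsPmf ν → IsPmf (P x u μ ν))
    (hπ : ∀ t x μ, IsPmf μ → IsPmf (π t x μ)) :
    ∀ t s, 0 ≤ Wproc P π x₀ t s := by
  intro t
  induction t with
  | zero => intro s; unfold Wproc; split <;> norm_num
  | succ t ih =>
    intro s'
    show 0 ≤ ∑ s : Fin N → X, Wproc P π x₀ t s *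
      ∑ a : Fin N → U, (∏ i, π t (s i) (emp s) (a i)) *
        ∏ i, P (s i) (a i) (emp s) (emp a) (s' i)
    apply Finset.sum_nonneg; intro s _
    apply mul_nonneg (ih s)
    apply Finset.sum_nonneg; intro a _
    apply mul_nonneg
    · exact Finset.prod_nonneg fun i _ => (hπ t (s i) (emp s) (isPmf_emp hN s)).1 _
    · exact Finset.prod_nonneg fun i _ =>
        (hP (s i) (a i) (emp s) (emp a) (isPmf_emp hN s) (isPmf_emp hN a)).1 _

lemma Wproc_sum {P : X → U → (X → ℝ) → (U → ℝ) → X → ℝ}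
    {π : ℕ → X → (X → ℝ) → U → ℝ} {x₀ : Fin N → X}
    (hN : 0 < N)
    (hP : ∀ x u μ ν, IsPmf μ → IsPmf ν → IsPmf (P x u μ ν))
    (hπ : ∀ t x μ, IsPmf μ → IsPmf (π t x μ)) :
    ∀ t, ∑ s, Wproc P π x₀ t s = 1 := by
  intro t
  induction t with
  | zero => simp [Wproc]
  | succ t ih =>
    show ∑ s' : Fin N → X, ∑ s : Fin N → X, Wproc P π x₀ t s *
      ∑ a : Fin N → U, (∏ i, π t (s i) (emp s) (a i)) *
        ∏ i, P (s i) (a i) (emp s) (emp a) (s' i) = 1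
    rw [Finset.sum_comm]
    have e : ∀ s : Fin N → X, ∑ s' : Fin N → X, Wproc P π x₀ t s *
        ∑ a : Fin N → U, (∏ i, π t (s i) (emp s) (a i)) *
          ∏ i, P (s i) (a i) (emp s) (emp a) (s' i) = Wproc P π x₀ t s := by
      intro s
      rw [← Finset.mul_sum]
      have : ∑ s' : Fin N → X, ∑ a : Fin N → U, (∏ i, π t (s i) (emp s) (a i)) *
          ∏ i, P (s i) (a i) (emp s) (emp a) (s' i) = 1 := by
        rw [Finset.sum_comm]
        have e2 : ∀ a : Fin N → U, ∑ s' : Fin N → X, (∏ i, π t (s i) (emp s) (a i)) *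
            ∏ i, P (s i) (a i) (emp s) (emp a) (s' i)
            = ∏ i, π t (s i) (emp s) (a i) := by
          intro a
          rw [← Finset.mul_sum,
            sum_pi_prod (fun i => P (s i) (a i) (emp s) (emp a))
              (fun i => (hP (s i) (a i) (emp s) (emp a) (isPmf_emp hN s) (isPmf_emp hN a)).2),
            mul_one]
        rw [Finset.sum_congr rfl fun a _ => e2 a]
        exact sum_pi_prod (fun i => π t (s i) (emp s))
          (fun i => (hπ t (s i) (emp s) (isPmf_emp hN s)).2)
      rw [this, mul_one]
    rw [Finset.sum_congr rfl fun s _ => e s, ih]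

end model
section step
set_option linter.unusedSectionVars false
set_option maxHeartbeats 1000000
variable {X U : Type*} [Fintype X] [Fintype U] [DecidableEq X] [DecidableEq U] {N : ℕ}

lemma mean_action_close (hN : 0 < N) {L_Q : ℝ} (hLQ : 0 ≤ L_Q)
    (π : X → (X → ℝ) → U → ℝ)
    (hπ : ∀ x ρ, IsPmf ρ → IsPmf (π x ρ))
    (hπLip : ∀ x ρ₁ ρ₂, IsPmf ρ₁ → IsPmf ρ₂ →
      l1 (fun u => π x ρ₁ u - π x ρ₂ u) ≤ L_Q * l1 (fun x' => ρ₁ x' - ρ₂ x'))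
    (μt : X → ℝ) (hμt : IsPmf μt) (s : Fin N → X) :
    l1 (fun u => (∑ i, π (s i) (emp s) u) / N - nuMF μt π u)
      ≤ (1 + L_Q) * l1 (fun x => emp s x - μt x) := by
  have hemp := isPmf_emp hN s
  have hπe : ∀ x, IsPmf (π x (emp s)) := fun x => hπ x _ hemp
  have hπμ : ∀ x, IsPmf (π x μt) := fun x => hπ x _ hμt
  have em : ∀ u, (∑ i, π (s i) (emp s) u) / (N:ℝ) = ∑ x, emp s x * π x (emp s) u :=
    fun u => (emp_integral s (fun x => π x (emp s) u)).symm
  have pointwise : ∀ u, |(∑ i, π (s i) (emp s) u) / (N:ℝ) - nuMF μt π u|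
      ≤ (∑ x, emp s x * |π x (emp s) u - π x μt u|)
        + ∑ x, |emp s x - μt x| * π x μt u := by
    intro u
    rw [em u]
    have key : (∑ x, emp s x * π x (emp s) u) - nuMF μt π u
        = (∑ x, emp s x * (π x (emp s) u - π x μt u))
          + ∑ x, (emp s x - μt x) * π x μt u := by
      unfold nuMF
      rw [← Finset.sum_add_distrib, ← Finset.sum_sub_distrib]
      apply Finset.sum_congr rfl; intro x _; ring
    rw [key]
    refine (abs_add_le _ _).trans (add_le_add ?_ ?_)
    · refine (Finset.abs_sum_le_sum_abs _ _).trans ?_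
      apply Finset.sum_le_sum; intro x _
      rw [abs_mul, abs_of_nonneg (hemp.1 x)]
    · refine (Finset.abs_sum_le_sum_abs _ _).trans ?_
      apply Finset.sum_le_sum; intro x _
      rw [abs_mul, abs_of_nonneg ((hπμ x).1 u)]
  calc l1 (fun u => (∑ i, π (s i) (emp s) u) / N - nuMF μt π u)
      ≤ ∑ u, ((∑ x, emp s x * |π x (emp s) u - π x μt u|)
          + ∑ x, |emp s x - μt x| * π x μt u) :=
        Finset.sum_le_sum fun u _ => pointwise u
    _ = (∑ x, emp s x * l1 (fun u => π x (emp s) u - π x μt u))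
        + ∑ x, |emp s x - μt x| := by
        rw [Finset.sum_add_distrib]
        congr 1
        · rw [Finset.sum_comm]
          apply Finset.sum_congr rfl; intro x _
          rw [← Finset.mul_sum]; rfl
        · rw [Finset.sum_comm]
          apply Finset.sum_congr rfl; intro x _
          rw [← Finset.mul_sum, (hπμ x).2, mul_one]
    _ ≤ (∑ x, emp s x * (L_Q * l1 (fun x' => emp s x' - μt x')))
        + l1 (fun x => emp s x - μt x) := by
        apply add_le_add _ le_rfl
        apply Finset.sum_le_sum; intro x _
        exact mul_le_mul_of_nonneg_left (hπLip x _ _ hemp hμt) (hemp.1 x)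
    _ = (1 + L_Q) * l1 (fun x => emp s x - μt x) := by
        rw [← Finset.sum_mul, hemp.2, one_mul]; ring

lemma action_sampling (hN : 0 < N) {L_Q : ℝ} (hLQ : 0 ≤ L_Q)
    (π : X → (X → ℝ) → U → ℝ)
    (hπ : ∀ x ρ, IsPmf ρ → IsPmf (π x ρ))
    (hπLip : ∀ x ρ₁ ρ₂, IsPmf ρ₁ → IsPmf ρ₂ →
      l1 (fun u => π x ρ₁ u - π x ρ₂ u) ≤ L_Q * l1 (fun x' => ρ₁ x' - ρ₂ x'))
    (μt : X → ℝ) (hμt : IsPmf μt) (s : Fin N → X) :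
    ∑ a : Fin N → U, (∏ i, π (s i) (emp s) (a i)) * l1 (fun u => emp a u - nuMF μt π u)
      ≤ Real.sqrt (Fintype.card U) / Real.sqrt N
        + (1 + L_Q) * l1 (fun x => emp s x - μt x) := by
  have hemp := isPmf_emp hN s
  have hq : ∀ i, IsPmf (π (s i) (emp s)) := fun i => hπ _ _ hemp
  set m : U → ℝ := fun u => (∑ i, π (s i) (emp s) u) / N with hm
  have hsamp' : ∑ a : Fin N → U, (∏ i, π (s i) (emp s) (a i)) *
      l1 (fun u => emp a u - m u) ≤ Real.sqrt (Fintype.card U) / Real.sqrt N :=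
    emp_sampling hN (fun i => π (s i) (emp s)) hq
  have hPinn : ∀ a : Fin N → U, 0 ≤ ∏ i, π (s i) (emp s) (a i) :=
    fun a => Finset.prod_nonneg fun i _ => (hq i).1 _
  have hPi1 : ∑ a : Fin N → U, ∏ i, π (s i) (emp s) (a i) =
      1 := sum_pi_prod _ fun i => (hq i).2
  calc ∑ a : Fin N → U, (∏ i, π (s i) (emp s) (a i)) * l1 (fun u => emp a u - nuMF μt π u)
      ≤ ∑ a : Fin N → U, (∏ i, π (s i) (emp s) (a i)) *
        (l1 (fun u => emp a u - m u) + l1 (fun u => m u - nuMF μt π u)) := by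
        apply Finset.sum_le_sum; intro a _
        exact mul_le_mul_of_nonneg_left (l1_triangle _ m _) (hPinn a)
    _ = (∑ a : Fin N → U, (∏ i, π (s i) (emp s) (a i)) * l1 (fun u => emp a u - m u))
        + l1 (fun u => m u - nuMF μt π u) := by
        rw [Finset.sum_congr rfl fun a (_ : a ∈ Finset.univ) => mul_add _ _ _,
          Finset.sum_add_distrib, ← Finset.sum_mul, hPi1, one_mul]
    _ ≤ Real.sqrt (Fintype.card U) / Real.sqrt N
        + (1 + L_Q) * l1 (fun x => emp s x - μt x) :=
        add_le_add hsamp' (mean_action_close hN hLQ π hπ hπLip μt hμt s)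

lemma reward_close_fixed (hN : 0 < N) {M_R L_Q : ℝ} (hMR : 0 ≤ M_R) (hLQ : 0 ≤ L_Q)
    (r : X → U → (X → ℝ) → (U → ℝ) → ℝ)
    (π : X → (X → ℝ) → U → ℝ)
    (hπ : ∀ x ρ, IsPmf ρ → IsPmf (π x ρ))
    (hπLip : ∀ x ρ₁ ρ₂, IsPmf ρ₁ → IsPmf ρ₂ →
      l1 (fun u => π x ρ₁ u - π x ρ₂ u) ≤ L_Q * l1 (fun x' => ρ₁ x' - ρ₂ x'))
    (μt : X → ℝ) (hμt : IsPmf μt)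
    (hbdd : ∀ x u, |r x u μt (nuMF μt π)| ≤ M_R)
    (s : Fin N → X) :
    |(∑ a : Fin N → U, (∏ i, π (s i) (emp s) (a i)) *
        ((1 / N : ℝ) * ∑ i, r (s i) (a i) μt (nuMF μt π))) - rMF r μt π|
      ≤ M_R * (1 + L_Q) * l1 (fun x => emp s x - μt x) := by
  have hemp := isPmf_emp hN s
  have hq : ∀ i, IsPmf (π (s i) (emp s)) := fun i => hπ _ _ hemp
  have hπμ : ∀ x, IsPmf (π x μt) := fun x => hπ x _ hμt
  have hNne : (N:ℝ) ≠ 0 := Nat.cast_ne_zero.mpr hN.ne'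
  set ν := nuMF μt π with hν
  set ρ : X → ℝ := fun x => ∑ u, π x μt u * r x u μt ν with hρdef
  have hρ : ∀ x, |ρ x| ≤ M_R := by
    intro x
    calc |ρ x| ≤ ∑ u, |π x μt u * r x u μt ν| := Finset.abs_sum_le_sum_abs _ _
      _ ≤ ∑ u, π x μt u * M_R := by
          apply Finset.sum_le_sum; intro u _
          rw [abs_mul, abs_of_nonneg ((hπμ x).1 u)]
          exact mul_le_mul_of_nonneg_left (hbdd x u) ((hπμ x).1 u)
      _ = M_R := by rw [← Finset.sum_mul, (hπμ x).2, one_mul]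
  have eq1 : (∑ a : Fin N → U, (∏ i, π (s i) (emp s) (a i)) *
      ((1 / N : ℝ) * ∑ i, r (s i) (a i) μt ν))
      = (1/N : ℝ) * ∑ i, ∑ u, π (s i) (emp s) u * r (s i) u μt ν := by
    have e0 : ∀ a : Fin N → U, (∏ i, π (s i) (emp s) (a i)) *
        ((1 / N : ℝ) * ∑ i, r (s i) (a i) μt ν)
        = (1/N : ℝ) * ∑ i, (∏ j, π (s j) (emp s) (a j)) * r (s i) (a i) μt ν := by
      intro a
      rw [mul_left_comm]
      congr 1
      exact Finset.mul_sum _ _ _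
    rw [Finset.sum_congr rfl fun a _ => e0 a, ← Finset.mul_sum]
    congr 1
    rw [Finset.sum_comm]
    apply Finset.sum_congr rfl; intro i _
    exact sum_pi_prod_mul (fun j => π (s j) (emp s)) (fun j => (hq j).2) i
      (fun u => r (s i) u μt ν)
  have eq2 : rMF r μt π = ∑ x, μt x * ρ x := by
    unfold rMF
    apply Finset.sum_congr rfl; intro x _
    rw [hρdef]
    dsimp only
    rw [Finset.mul_sum]
    apply Finset.sum_congr rfl; intro u _
    ring
  have emp_int : (1/N : ℝ) * ∑ i, ρ (s i) = ∑ x, emp s x * ρ x := by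
    rw [emp_integral s ρ]
    ring
  have split : (1/N : ℝ) * (∑ i, ∑ u, π (s i) (emp s) u * r (s i) u μt ν) - rMF r μt π
      = (1/N : ℝ) * (∑ i, ((∑ u, π (s i) (emp s) u * r (s i) u μt ν) - ρ (s i)))
        + ∑ x, (emp s x - μt x) * ρ x := by
    have h1 : ∑ i, ((∑ u, π (s i) (emp s) u * r (s i) u μt ν) - ρ (s i))
        = (∑ i, ∑ u, π (s i) (emp s) u * r (s i) u μt ν) - ∑ i, ρ (s i) :=
      Finset.sum_sub_distrib _ _
    have h2 : ∑ x, (emp s x - μt x) * ρ x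
        = (∑ x, emp s x * ρ x) - ∑ x, μt x * ρ x := by
      rw [← Finset.sum_sub_distrib]
      apply Finset.sum_congr rfl; intro x _; ring
    rw [h1, h2, eq2, ← emp_int]
    ring
  rw [eq1, split]
  have hl1 : 0 ≤ l1 (fun x => emp s x - μt x) := l1_nonneg _
  have hA : |(1/N : ℝ) * (∑ i, ((∑ u, π (s i) (emp s) u * r (s i) u μt ν) - ρ (s i)))|
      ≤ M_R * (L_Q * l1 (fun x => emp s x - μt x)) := by
    rw [abs_mul, abs_of_nonneg (by positivity : (0:ℝ) ≤ 1/(N:ℝ))]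
    have hper : ∀ i : Fin N, |(∑ u, π (s i) (emp s) u * r (s i) u μt ν) - ρ (s i)|
        ≤ M_R * (L_Q * l1 (fun x => emp s x - μt x)) := by
      intro i
      have e : (∑ u, π (s i) (emp s) u * r (s i) u μt ν) - ρ (s i)
          = ∑ u, (π (s i) (emp s) u - π (s i) μt u) * r (s i) u μt ν := by
        rw [hρdef]
        dsimp only
        rw [← Finset.sum_sub_distrib]
        apply Finset.sum_congr rfl; intro u _; ring
      rw [e]
      calc |∑ u, (π (s i) (emp s) u - π (s i) μt u) * r (s i) u μt ν|
          ≤ ∑ u, |(π (s i) (emp s) u - π (s i) μt u)| * M_R := by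
            refine (Finset.abs_sum_le_sum_abs _ _).trans ?_
            apply Finset.sum_le_sum; intro u _
            rw [abs_mul]
            exact mul_le_mul_of_nonneg_left (hbdd (s i) u) (abs_nonneg _)
        _ = M_R * l1 (fun u => π (s i) (emp s) u - π (s i) μt u) := by
            rw [← Finset.sum_mul, mul_comm]; rfl
        _ ≤ M_R * (L_Q * l1 (fun x => emp s x - μt x)) :=
            mul_le_mul_of_nonneg_left (hπLip (s i) _ _ hemp hμt) hMR
    calc (1/(N:ℝ)) * |∑ i, ((∑ u, π (s i) (emp s) u * r (s i) u μt ν) - ρ (s i))|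
        ≤ (1/(N:ℝ)) * ∑ i, |(∑ u, π (s i) (emp s) u * r (s i) u μt ν) - ρ (s i)| :=
          mul_le_mul_of_nonneg_left (Finset.abs_sum_le_sum_abs _ _) (by positivity)
      _ ≤ (1/(N:ℝ)) * ∑ _i : Fin N, M_R * (L_Q * l1 (fun x => emp s x - μt x)) :=
          mul_le_mul_of_nonneg_left (Finset.sum_le_sum fun i _ => hper i) (by positivity)
      _ = M_R * (L_Q * l1 (fun x => emp s x - μt x)) := by
          rw [Finset.sum_const, Finset.card_univ, Fintype.card_fin, nsmul_eq_mul]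
          field_simp
  have hB : |∑ x, (emp s x - μt x) * ρ x| ≤ M_R * l1 (fun x => emp s x - μt x) := by
    calc |∑ x, (emp s x - μt x) * ρ x| ≤ ∑ x, |emp s x - μt x| * M_R := by
          refine (Finset.abs_sum_le_sum_abs _ _).trans ?_
          apply Finset.sum_le_sum; intro x _
          rw [abs_mul]
          exact mul_le_mul_of_nonneg_left (hρ x) (abs_nonneg _)
      _ = M_R * l1 (fun x => emp s x - μt x) := by rw [← Finset.sum_mul, mul_comm]; rfl
  calc |(1/N : ℝ) * (∑ i, ((∑ u, π (s i) (emp s) u * r (s i) u μt ν) - ρ (s i)))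
        + ∑ x, (emp s x - μt x) * ρ x|
      ≤ M_R * (L_Q * l1 (fun x => emp s x - μt x)) + M_R * l1 (fun x => emp s x - μt x) :=
        (abs_add_le _ _).trans (add_le_add hA hB)
    _ = M_R * (1 + L_Q) * l1 (fun x => emp s x - μt x) := by ring

lemma mean_state_close (hN : 0 < N) {L_Q : ℝ} (hLQ : 0 ≤ L_Q)
    (π : X → (X → ℝ) → U → ℝ)
    (hπ : ∀ x ρ, IsPmf ρ → IsPmf (π x ρ))
    (hπLip : ∀ x ρ₁ ρ₂, IsPmf ρ₁ → IsPmf ρ₂ →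
      l1 (fun u => π x ρ₁ u - π x ρ₂ u) ≤ L_Q * l1 (fun x' => ρ₁ x' - ρ₂ x'))
    (P : X → U → (X → ℝ) → (U → ℝ) → X → ℝ)
    (hP : ∀ x u μ ν, IsPmf μ → IsPmf ν → IsPmf (P x u μ ν))
    (μt : X → ℝ) (hμt : IsPmf μt) (s : Fin N → X) :
    l1 (fun y => (∑ i, ∑ u, π (s i) (emp s) u * P (s i) u μt (nuMF μt π) y) / N
        - PMF' P μt π y)
      ≤ (1 + L_Q) * l1 (fun x => emp s x - μt x) := by
  have hemp := isPmf_emp hN s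
  have hπμ : ∀ x, IsPmf (π x μt) := fun x => hπ x _ hμt
  have hν : IsPmf (nuMF μt π) := isPmf_nuMF hμt hπμ
  have hPp : ∀ x u, IsPmf (P x u μt (nuMF μt π)) := fun x u => hP x u _ _ hμt hν
  set Bt : X → X → ℝ := fun x y => ∑ u, π x (emp s) u * P x u μt (nuMF μt π) y with hBt
  set B : X → X → ℝ := fun x y => ∑ u, π x μt u * P x u μt (nuMF μt π) y with hB
  have hBnn : ∀ x y, 0 ≤ B x y :=
    fun x y => Finset.sum_nonneg fun u _ => mul_nonneg ((hπμ x).1 u) ((hPp x u).1 y)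
  have hBsum : ∀ x, ∑ y, B x y = 1 := by
    intro x
    rw [hB]
    dsimp only
    rw [Finset.sum_comm]
    have : ∀ u : U, ∑ y, π x μt u * P x u μt (nuMF μt π) y = π x μt u := by
      intro u; rw [← Finset.mul_sum, (hPp x u).2, mul_one]
    rw [Finset.sum_congr rfl fun u _ => this u, (hπμ x).2]
  have hBdiff : ∀ x, ∑ y, |Bt x y - B x y| ≤ L_Q * l1 (fun x' => emp s x' - μt x') := by
    intro x
    have e : ∀ y, Bt x y - B x y
        = ∑ u, (π x (emp s) u - π x μt u) * P x u μt (nuMF μt π) y := by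
      intro y
      rw [hBt, hB]
      dsimp only
      rw [← Finset.sum_sub_distrib]
      apply Finset.sum_congr rfl; intro u _; ring
    calc ∑ y, |Bt x y - B x y|
        ≤ ∑ y, ∑ u, |π x (emp s) u - π x μt u| * P x u μt (nuMF μt π) y := by
          apply Finset.sum_le_sum; intro y _
          rw [e y]
          refine (Finset.abs_sum_le_sum_abs _ _).trans ?_
          apply Finset.sum_le_sum; intro u _
          rw [abs_mul, abs_of_nonneg ((hPp x u).1 y)]
      _ = ∑ u, |π x (emp s) u - π x μt u| := by
          rw [Finset.sum_comm]
          apply Finset.sum_congr rfl; intro u _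
          rw [← Finset.mul_sum, (hPp x u).2, mul_one]
      _ ≤ L_Q * l1 (fun x' => emp s x' - μt x') := hπLip x _ _ hemp hμt
  have em : ∀ y, (∑ i, ∑ u, π (s i) (emp s) u * P (s i) u μt (nuMF μt π) y) / (N:ℝ)
      = ∑ x, emp s x * Bt x y := by
    intro y
    rw [← emp_integral s (fun x => Bt x y)]
  have ePMF : ∀ y, PMF' P μt π y = ∑ x, μt x * B x y := by
    intro y
    unfold PMF'
    apply Finset.sum_congr rfl; intro x _
    rw [hB]
    dsimp only
    rw [Finset.mul_sum]
    apply Finset.sum_congr rfl; intro u _; ring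
  calc l1 (fun y => (∑ i, ∑ u, π (s i) (emp s) u * P (s i) u μt (nuMF μt π) y) / N
        - PMF' P μt π y)
      = ∑ y, |(∑ x, emp s x * Bt x y) - ∑ x, μt x * B x y| := by
        unfold l1
        apply Finset.sum_congr rfl; intro y _
        rw [← em y, ← ePMF y]
    _ ≤ ∑ y, ((∑ x, emp s x * |Bt x y - B x y|) + ∑ x, |emp s x - μt x| * B x y) := by
        apply Finset.sum_le_sum; intro y _
        have key : (∑ x, emp s x * Bt x y) - ∑ x, μt x * B x y
            = (∑ x, emp s x * (Bt x y - B x y)) + ∑ x, (emp s x - μt x) * B x y := by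
          rw [← Finset.sum_add_distrib, ← Finset.sum_sub_distrib]
          apply Finset.sum_congr rfl; intro x _; ring
        rw [key]
        refine (abs_add_le _ _).trans (add_le_add ?_ ?_)
        · refine (Finset.abs_sum_le_sum_abs _ _).trans ?_
          apply Finset.sum_le_sum; intro x _
          rw [abs_mul, abs_of_nonneg (hemp.1 x)]
        · refine (Finset.abs_sum_le_sum_abs _ _).trans ?_
          apply Finset.sum_le_sum; intro x _
          rw [abs_mul, abs_of_nonneg (hBnn x y)]
    _ = (∑ x, emp s x * ∑ y, |Bt x y - B x y|) + ∑ x, |emp s x - μt x| := by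
        rw [Finset.sum_add_distrib]
        congr 1
        · rw [Finset.sum_comm]
          apply Finset.sum_congr rfl; intro x _
          rw [← Finset.mul_sum]
        · rw [Finset.sum_comm]
          apply Finset.sum_congr rfl; intro x _
          rw [← Finset.mul_sum, hBsum x, mul_one]
    _ ≤ (∑ x, emp s x * (L_Q * l1 (fun x' => emp s x' - μt x')))
        + l1 (fun x => emp s x - μt x) := by
        apply add_le_add _ le_rfl
        apply Finset.sum_le_sum; intro x _
        exact mul_le_mul_of_nonneg_left (hBdiff x) (hemp.1 x)
    _ = (1 + L_Q) * l1 (fun x => emp s x - μt x) := by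
        rw [← Finset.sum_mul, hemp.2, one_mul]; ring

lemma state_step (hN : 0 < N) {L_P L_Q : ℝ} (hLP : 0 ≤ L_P) (hLQ : 0 ≤ L_Q)
    (π : X → (X → ℝ) → U → ℝ)
    (hπ : ∀ x ρ, IsPmf ρ → IsPmf (π x ρ))
    (hπLip : ∀ x ρ₁ ρ₂, IsPmf ρ₁ → IsPmf ρ₂ →
      l1 (fun u => π x ρ₁ u - π x ρ₂ u) ≤ L_Q * l1 (fun x' => ρ₁ x' - ρ₂ x'))
    (P : X → U → (X → ℝ) → (U → ℝ) → X → ℝ)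
    (hP : ∀ x u μ ν, IsPmf μ → IsPmf ν → IsPmf (P x u μ ν))
    (hPLip : ∀ x u μ₁ μ₂ ν₁ ν₂, IsPmf μ₁ → IsPmf μ₂ → IsPmf ν₁ → IsPmf ν₂ →
      l1 (fun y => P x u μ₁ ν₁ y - P x u μ₂ ν₂ y)
        ≤ L_P * (l1 (fun x' => μ₁ x' - μ₂ x') + l1 (fun u' => ν₁ u' - ν₂ u')))
    (μt : X → ℝ) (hμt : IsPmf μt) (s : Fin N → X) :
    ∑ a : Fin N → U, (∏ i, π (s i) (emp s) (a i)) *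
      ∑ s' : Fin N → X, (∏ i, P (s i) (a i) (emp s) (emp a) (s' i)) *
        l1 (fun y => emp s' y - PMF' P μt π y)
      ≤ 2 * Real.sqrt (Fintype.card X) / Real.sqrt N
        + L_P * (Real.sqrt (Fintype.card U) / Real.sqrt N)
        + ((1 + L_Q) + L_P * (2 + L_Q)) * l1 (fun x => emp s x - μt x) := by
  have hemp := isPmf_emp hN s
  have hq : ∀ i, IsPmf (π (s i) (emp s)) := fun i => hπ _ _ hemp
  have hπμ : ∀ x, IsPmf (π x μt) := fun x => hπ x _ hμt
  have hνp : IsPmf (nuMF μt π) := isPmf_nuMF hμt hπμ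
  have hPμν : ∀ x u, IsPmf (P x u μt (nuMF μt π)) := fun x u => hP x u _ _ hμt hνp
  have hl1s : 0 ≤ l1 (fun x => emp s x - μt x) := l1_nonneg _
  have hNne : (N:ℝ) ≠ 0 := Nat.cast_ne_zero.mpr hN.ne'
  have hPinn : ∀ a : Fin N → U, 0 ≤ ∏ i, π (s i) (emp s) (a i) :=
    fun a => Finset.prod_nonneg fun i _ => (hq i).1 _
  have hPi1 : ∑ a : Fin N → U, ∏ i, π (s i) (emp s) (a i) = 1 :=
    sum_pi_prod _ fun i => (hq i).2
  set Rb : X → ℝ :=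
    fun y => (∑ i, ∑ u, π (s i) (emp s) u * P (s i) u μt (nuMF μt π) y) / N with hRbdef
  have h4 : l1 (fun y => Rb y - PMF' P μt π y)
      ≤ (1 + L_Q) * l1 (fun x => emp s x - μt x) :=
    mean_state_close hN hLQ π hπ hπLip P hP μt hμt s
  have h3 : ∑ a : Fin N → U, (∏ i, π (s i) (emp s) (a i)) *
      l1 (fun y => (∑ i, P (s i) (a i) μt (nuMF μt π) y) / N - Rb y)
      ≤ Real.sqrt (Fintype.card X) / Real.sqrt N :=
    fn_sampling hN (fun i => π (s i) (emp s)) hq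
      (fun i u y => P (s i) u μt (nuMF μt π) y) (fun i u => hPμν (s i) u)
  have h1 : ∀ a : Fin N → U, ∑ s' : Fin N → X,
      (∏ i, P (s i) (a i) (emp s) (emp a) (s' i)) *
        l1 (fun y => emp s' y - (∑ i, P (s i) (a i) (emp s) (emp a) y) / N)
      ≤ Real.sqrt (Fintype.card X) / Real.sqrt N := fun a =>
    emp_sampling hN (fun i => P (s i) (a i) (emp s) (emp a))
      (fun i => hP _ _ _ _ hemp (isPmf_emp hN a))
  have h2 : ∀ a : Fin N → U,
      l1 (fun y => (∑ i, P (s i) (a i) (emp s) (emp a) y) / N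
        - (∑ i, P (s i) (a i) μt (nuMF μt π) y) / N)
      ≤ L_P * (l1 (fun x => emp s x - μt x) + l1 (fun u => emp a u - nuMF μt π u)) := by
    intro a
    have hea := isPmf_emp hN a
    calc l1 (fun y => (∑ i, P (s i) (a i) (emp s) (emp a) y) / N
          - (∑ i, P (s i) (a i) μt (nuMF μt π) y) / N)
        = ∑ y, |∑ i, (P (s i) (a i) (emp s) (emp a) y
            - P (s i) (a i) μt (nuMF μt π) y)| / N := by
          unfold l1
          apply Finset.sum_congr rfl; intro y _
          dsimp only
          rw [div_sub_div_same, ← Finset.sum_sub_distrib, abs_div,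
            abs_of_nonneg (show (0:ℝ) ≤ (N:ℝ) from Nat.cast_nonneg N)]
      _ ≤ ∑ y, (∑ i, |P (s i) (a i) (emp s) (emp a) y
            - P (s i) (a i) μt (nuMF μt π) y|) / N := by
          apply Finset.sum_le_sum; intro y _
          apply div_le_div_of_nonneg_right (Finset.abs_sum_le_sum_abs _ _)
            (Nat.cast_nonneg N)
      _ = (∑ i, ∑ y, |P (s i) (a i) (emp s) (emp a) y
            - P (s i) (a i) μt (nuMF μt π) y|) / N := by
          rw [← Finset.sum_div, Finset.sum_comm]
      _ ≤ (∑ _i : Fin N, L_P * (l1 (fun x => emp s x - μt x)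
            + l1 (fun u => emp a u - nuMF μt π u))) / N := by
          apply div_le_div_of_nonneg_right _ (Nat.cast_nonneg N)
          exact Finset.sum_le_sum fun i _ =>
            hPLip (s i) (a i) (emp s) μt (emp a) (nuMF μt π) hemp hμt hea hνp
      _ = L_P * (l1 (fun x => emp s x - μt x)
            + l1 (fun u => emp a u - nuMF μt π u)) := by
          rw [Finset.sum_const, Finset.card_univ, Fintype.card_fin, nsmul_eq_mul]
          field_simp
  have inner_bound : ∀ a : Fin N → U,
      ∑ s' : Fin N → X, (∏ i, P (s i) (a i) (emp s) (emp a) (s' i)) *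
        l1 (fun y => emp s' y - PMF' P μt π y)
      ≤ Real.sqrt (Fintype.card X) / Real.sqrt N
        + (l1 (fun y => (∑ i, P (s i) (a i) (emp s) (emp a) y) / N
            - (∑ i, P (s i) (a i) μt (nuMF μt π) y) / N)
          + l1 (fun y => (∑ i, P (s i) (a i) μt (nuMF μt π) y) / N - Rb y)
          + l1 (fun y => Rb y - PMF' P μt π y)) := by
    intro a
    have hea := isPmf_emp hN a
    have hprod_nn : ∀ s' : Fin N → X, 0 ≤ ∏ i, P (s i) (a i) (emp s) (emp a) (s' i) :=
      fun s' => Finset.prod_nonneg fun i _ => (hP _ _ _ _ hemp hea).1 _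
    have hprod1 : ∑ s' : Fin N → X, ∏ i, P (s i) (a i) (emp s) (emp a) (s' i) = 1 :=
      sum_pi_prod _ fun i => (hP _ _ _ _ hemp hea).2
    have tri : ∀ s' : Fin N → X, l1 (fun y => emp s' y - PMF' P μt π y)
        ≤ l1 (fun y => emp s' y - (∑ i, P (s i) (a i) (emp s) (emp a) y) / N)
          + (l1 (fun y => (∑ i, P (s i) (a i) (emp s) (emp a) y) / N
              - (∑ i, P (s i) (a i) μt (nuMF μt π) y) / N)
            + l1 (fun y => (∑ i, P (s i) (a i) μt (nuMF μt π) y) / N - Rb y)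
            + l1 (fun y => Rb y - PMF' P μt π y)) := by
      intro s'
      have t1 := l1_triangle (fun y => emp s' y)
        (fun y => (∑ i, P (s i) (a i) (emp s) (emp a) y) / N)
        (fun y => PMF' P μt π y)
      have t2 := l1_triangle (fun y => (∑ i, P (s i) (a i) (emp s) (emp a) y) / N)
        (fun y => (∑ i, P (s i) (a i) μt (nuMF μt π) y) / N)
        (fun y => PMF' P μt π y)
      have t3 := l1_triangle (fun y => (∑ i, P (s i) (a i) μt (nuMF μt π) y) / N)
        Rb (fun y => PMF' P μt π y)
      linarith
    calc ∑ s' : Fin N → X, (∏ i, P (s i) (a i) (emp s) (emp a) (s' i)) *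
          l1 (fun y => emp s' y - PMF' P μt π y)
        ≤ ∑ s' : Fin N → X, (∏ i, P (s i) (a i) (emp s) (emp a) (s' i)) *
          (l1 (fun y => emp s' y - (∑ i, P (s i) (a i) (emp s) (emp a) y) / N)
            + (l1 (fun y => (∑ i, P (s i) (a i) (emp s) (emp a) y) / N
                - (∑ i, P (s i) (a i) μt (nuMF μt π) y) / N)
              + l1 (fun y => (∑ i, P (s i) (a i) μt (nuMF μt π) y) / N - Rb y)
              + l1 (fun y => Rb y - PMF' P μt π y))) :=
          Finset.sum_le_sum fun s' _ =>
            mul_le_mul_of_nonneg_left (tri s') (hprod_nn s')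
      _ = (∑ s' : Fin N → X, (∏ i, P (s i) (a i) (emp s) (emp a) (s' i)) *
            l1 (fun y => emp s' y - (∑ i, P (s i) (a i) (emp s) (emp a) y) / N))
          + (l1 (fun y => (∑ i, P (s i) (a i) (emp s) (emp a) y) / N
              - (∑ i, P (s i) (a i) μt (nuMF μt π) y) / N)
            + l1 (fun y => (∑ i, P (s i) (a i) μt (nuMF μt π) y) / N - Rb y)
            + l1 (fun y => Rb y - PMF' P μt π y)) := by
          rw [Finset.sum_congr rfl fun s' (_ : s' ∈ Finset.univ) => mul_add _ _ _,
            Finset.sum_add_distrib, ← Finset.sum_mul, hprod1, one_mul]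
      _ ≤ Real.sqrt (Fintype.card X) / Real.sqrt N
          + (l1 (fun y => (∑ i, P (s i) (a i) (emp s) (emp a) y) / N
              - (∑ i, P (s i) (a i) μt (nuMF μt π) y) / N)
            + l1 (fun y => (∑ i, P (s i) (a i) μt (nuMF μt π) y) / N - Rb y)
            + l1 (fun y => Rb y - PMF' P μt π y)) := add_le_add (h1 a) le_rfl
  have hmid : ∑ a : Fin N → U, (∏ i, π (s i) (emp s) (a i)) *
      l1 (fun y => (∑ i, P (s i) (a i) (emp s) (emp a) y) / N
        - (∑ i, P (s i) (a i) μt (nuMF μt π) y) / N)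
      ≤ L_P * l1 (fun x => emp s x - μt x)
        + L_P * (Real.sqrt (Fintype.card U) / Real.sqrt N
          + (1 + L_Q) * l1 (fun x => emp s x - μt x)) := by
    calc ∑ a : Fin N → U, (∏ i, π (s i) (emp s) (a i)) *
          l1 (fun y => (∑ i, P (s i) (a i) (emp s) (emp a) y) / N
            - (∑ i, P (s i) (a i) μt (nuMF μt π) y) / N)
        ≤ ∑ a : Fin N → U, (∏ i, π (s i) (emp s) (a i)) *
          (L_P * (l1 (fun x => emp s x - μt x) + l1 (fun u => emp a u - nuMF μt π u))) :=
          Finset.sum_le_sum fun a _ => mul_le_mul_of_nonneg_left (h2 a) (hPinn a)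
      _ = L_P * l1 (fun x => emp s x - μt x)
          + L_P * ∑ a : Fin N → U, (∏ i, π (s i) (emp s) (a i)) *
            l1 (fun u => emp a u - nuMF μt π u) := by
          have e : ∀ a : Fin N → U, (∏ i, π (s i) (emp s) (a i)) *
              (L_P * (l1 (fun x => emp s x - μt x) + l1 (fun u => emp a u - nuMF μt π u)))
              = (L_P * l1 (fun x => emp s x - μt x)) * (∏ i, π (s i) (emp s) (a i))
                + L_P * ((∏ i, π (s i) (emp s) (a i)) *
                  l1 (fun u => emp a u - nuMF μt π u)) := by
            intro a; ring
          rw [Finset.sum_congr rfl fun a _ => e a, Finset.sum_add_distrib,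
            ← Finset.mul_sum, ← Finset.mul_sum, hPi1, mul_one]
      _ ≤ L_P * l1 (fun x => emp s x - μt x)
          + L_P * (Real.sqrt (Fintype.card U) / Real.sqrt N
            + (1 + L_Q) * l1 (fun x => emp s x - μt x)) := by
          apply add_le_add le_rfl
          exact mul_le_mul_of_nonneg_left
            (action_sampling hN hLQ π hπ hπLip μt hμt s) hLP
  calc ∑ a : Fin N → U, (∏ i, π (s i) (emp s) (a i)) *
        ∑ s' : Fin N → X, (∏ i, P (s i) (a i) (emp s) (emp a) (s' i)) *
          l1 (fun y => emp s' y - PMF' P μt π y)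
      ≤ ∑ a : Fin N → U, (∏ i, π (s i) (emp s) (a i)) *
        (Real.sqrt (Fintype.card X) / Real.sqrt N
          + (l1 (fun y => (∑ i, P (s i) (a i) (emp s) (emp a) y) / N
              - (∑ i, P (s i) (a i) μt (nuMF μt π) y) / N)
            + l1 (fun y => (∑ i, P (s i) (a i) μt (nuMF μt π) y) / N - Rb y)
            + l1 (fun y => Rb y - PMF' P μt π y))) :=
        Finset.sum_le_sum fun a _ => mul_le_mul_of_nonneg_left (inner_bound a) (hPinn a)
    _ = Real.sqrt (Fintype.card X) / Real.sqrt N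
        + ((∑ a : Fin N → U, (∏ i, π (s i) (emp s) (a i)) *
            l1 (fun y => (∑ i, P (s i) (a i) (emp s) (emp a) y) / N
              - (∑ i, P (s i) (a i) μt (nuMF μt π) y) / N))
          + (∑ a : Fin N → U, (∏ i, π (s i) (emp s) (a i)) *
            l1 (fun y => (∑ i, P (s i) (a i) μt (nuMF μt π) y) / N - Rb y))
          + l1 (fun y => Rb y - PMF' P μt π y)) := by
        have e : ∀ a : Fin N → U, (∏ i, π (s i) (emp s) (a i)) *
            (Real.sqrt (Fintype.card X) / Real.sqrt N
              + (l1 (fun y => (∑ i, P (s i) (a i) (emp s) (emp a) y) / N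
                  - (∑ i, P (s i) (a i) μt (nuMF μt π) y) / N)
                + l1 (fun y => (∑ i, P (s i) (a i) μt (nuMF μt π) y) / N - Rb y)
                + l1 (fun y => Rb y - PMF' P μt π y)))
            = (Real.sqrt (Fintype.card X) / Real.sqrt N
                + l1 (fun y => Rb y - PMF' P μt π y)) * (∏ i, π (s i) (emp s) (a i))
              + ((∏ i, π (s i) (emp s) (a i)) *
                  l1 (fun y => (∑ i, P (s i) (a i) (emp s) (emp a) y) / N
                    - (∑ i, P (s i) (a i) μt (nuMF μt π) y) / N)
                + (∏ i, π (s i) (emp s) (a i)) *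
                  l1 (fun y => (∑ i, P (s i) (a i) μt (nuMF μt π) y) / N - Rb y)) := by
          intro a; ring
        rw [Finset.sum_congr rfl fun a _ => e a, Finset.sum_add_distrib,
          ← Finset.mul_sum, hPi1, mul_one, Finset.sum_add_distrib]
        ring
    _ ≤ Real.sqrt (Fintype.card X) / Real.sqrt N
        + ((L_P * l1 (fun x => emp s x - μt x)
            + L_P * (Real.sqrt (Fintype.card U) / Real.sqrt N
              + (1 + L_Q) * l1 (fun x => emp s x - μt x)))
          + Real.sqrt (Fintype.card X) / Real.sqrt N
          + (1 + L_Q) * l1 (fun x => emp s x - μt x)) := by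
        apply add_le_add le_rfl
        exact add_le_add (add_le_add hmid h3) h4
    _ = 2 * Real.sqrt (Fintype.card X) / Real.sqrt N
        + L_P * (Real.sqrt (Fintype.card U) / Real.sqrt N)
        + ((1 + L_Q) + L_P * (2 + L_Q)) * l1 (fun x => emp s x - μt x) := by ring

end step
section glob
set_option linter.unusedSectionVars false
set_option maxHeartbeats 1000000
variable {X U : Type*} [Fintype X] [Fintype U] [DecidableEq X] [DecidableEq U] {N : ℕ}

lemma Wstep_expect (P : X → U → (X → ℝ) → (U → ℝ) → X → ℝ)
    (π : ℕ → X → (X → ℝ) → U → ℝ) (x₀ : Fin N → X) (t : ℕ) (f : (Fin N → X) → ℝ) :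
    ∑ s', Wproc P π x₀ (t+1) s' * f s'
      = ∑ s, Wproc P π x₀ t s * ∑ a : Fin N → U, (∏ i, π t (s i) (emp s) (a i)) *
          ∑ s', (∏ i, P (s i) (a i) (emp s) (emp a) (s' i)) * f s' := by
  have step1 : ∀ s' : Fin N → X, Wproc P π x₀ (t+1) s' * f s'
      = ∑ s, Wproc P π x₀ t s * ∑ a : Fin N → U, (∏ i, π t (s i) (emp s) (a i)) *
          ((∏ i, P (s i) (a i) (emp s) (emp a) (s' i)) * f s') := by
    intro s'
    show (∑ s : Fin N → X, Wproc P π x₀ t s *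
        ∑ a : Fin N → U, (∏ i, π t (s i) (emp s) (a i)) *
          ∏ i, P (s i) (a i) (emp s) (emp a) (s' i)) * f s' = _
    rw [Finset.sum_mul]
    apply Finset.sum_congr rfl; intro s _
    rw [mul_assoc]
    congr 1
    rw [Finset.sum_mul]
    apply Finset.sum_congr rfl; intro a _
    rw [mul_assoc]
  rw [Finset.sum_congr rfl fun s' _ => step1 s', Finset.sum_comm]
  apply Finset.sum_congr rfl; intro s _
  rw [← Finset.mul_sum]
  congr 1
  rw [Finset.sum_comm]
  apply Finset.sum_congr rfl; intro a _
  rw [← Finset.mul_sum]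

lemma rMF_bdd {M_R : ℝ} (hMR : 0 ≤ M_R) (r : X → U → (X → ℝ) → (U → ℝ) → ℝ)
    {μ : X → ℝ} (hμ : IsPmf μ) {π : X → (X → ℝ) → U → ℝ}
    (hπ : ∀ x, IsPmf (π x μ))
    (hbdd : ∀ x u, |r x u μ (nuMF μ π)| ≤ M_R) :
    |rMF r μ π| ≤ M_R := by
  unfold rMF
  calc |∑ x, ∑ u, r x u μ (nuMF μ π) * π x μ u * μ x|
      ≤ ∑ x, ∑ u, |r x u μ (nuMF μ π) * π x μ u * μ x| := by
        refine (Finset.abs_sum_le_sum_abs _ _).trans ?_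
        exact Finset.sum_le_sum fun x _ => Finset.abs_sum_le_sum_abs _ _
    _ ≤ ∑ x, ∑ u, M_R * (π x μ u * μ x) := by
        apply Finset.sum_le_sum; intro x _
        apply Finset.sum_le_sum; intro u _
        rw [abs_mul, abs_mul, abs_of_nonneg ((hπ x).1 u), abs_of_nonneg (hμ.1 x),
          mul_assoc]
        exact mul_le_mul_of_nonneg_right (hbdd x u)
          (mul_nonneg ((hπ x).1 u) (hμ.1 x))
    _ = M_R := by
        rw [Finset.sum_congr rfl fun x (_ : x ∈ Finset.univ) => (Finset.mul_sum _ _ _).symm,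
          ← Finset.mul_sum]
        have : ∑ x, ∑ u, π x μ u * μ x = 1 := by
          have e : ∀ x : X, ∑ u, π x μ u * μ x = μ x := by
            intro x; rw [← Finset.sum_mul, (hπ x).2, one_mul]
          rw [Finset.sum_congr rfl fun x _ => e x, hμ.2]
        rw [this, mul_one]

lemma e_step (hN : 0 < N) {L_P L_Q : ℝ} (hLP : 0 ≤ L_P) (hLQ : 0 ≤ L_Q)
    (P : X → U → (X → ℝ) → (U → ℝ) → X → ℝ)
    (hP : ∀ x u μ ν, IsPmf μ → IsPmf ν → IsPmf (P x u μ ν))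
    (hPLip : ∀ x u μ₁ μ₂ ν₁ ν₂, IsPmf μ₁ → IsPmf μ₂ → IsPmf ν₁ → IsPmf ν₂ →
      l1 (fun y => P x u μ₁ ν₁ y - P x u μ₂ ν₂ y)
        ≤ L_P * (l1 (fun x' => μ₁ x' - μ₂ x') + l1 (fun u' => ν₁ u' - ν₂ u')))
    (πb : ℕ → X → (X → ℝ) → U → ℝ)
    (hπ : ∀ t x μ, IsPmf μ → IsPmf (πb t x μ))
    (hπLip : ∀ t x μ₁ μ₂, IsPmf μ₁ → IsPmf μ₂ →
      l1 (fun u => πb t x μ₁ u - πb t x μ₂ u) ≤ L_Q * l1 (fun x' => μ₁ x' - μ₂ x'))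
    (x₀ : Fin N → X) (μt : X → ℝ) (hμt : IsPmf μt) (t : ℕ) :
    ∑ s', Wproc P πb x₀ (t+1) s' * l1 (fun x => emp s' x - PMF' P μt (πb t) x)
      ≤ (2 * Real.sqrt (Fintype.card X) / Real.sqrt N
          + L_P * (Real.sqrt (Fintype.card U) / Real.sqrt N))
        + ((1 + L_Q) + L_P * (2 + L_Q)) *
            ∑ s, Wproc P πb x₀ t s * l1 (fun x => emp s x - μt x) := by
  have hW1 := Wproc_sum (x₀ := x₀) hN hP hπ
  have hWnn := Wproc_nonneg (x₀ := x₀) hN hP hπ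
  rw [Wstep_expect P πb x₀ t (fun s' => l1 (fun x => emp s' x - PMF' P μt (πb t) x))]
  have key : ∀ s : Fin N → X,
      ∑ a : Fin N → U, (∏ i, πb t (s i) (emp s) (a i)) *
        ∑ s', (∏ i, P (s i) (a i) (emp s) (emp a) (s' i)) *
          l1 (fun x => emp s' x - PMF' P μt (πb t) x)
      ≤ (2 * Real.sqrt (Fintype.card X) / Real.sqrt N
          + L_P * (Real.sqrt (Fintype.card U) / Real.sqrt N))
        + ((1 + L_Q) + L_P * (2 + L_Q)) * l1 (fun x => emp s x - μt x) := by
    intro s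
    have h := state_step hN hLP hLQ (πb t) (fun x ρ hρ => hπ t x ρ hρ)
      (fun x ρ₁ ρ₂ h1 h2 => hπLip t x ρ₁ ρ₂ h1 h2) P hP hPLip μt hμt s
    linarith [h]
  calc ∑ s, Wproc P πb x₀ t s *
        ∑ a : Fin N → U, (∏ i, πb t (s i) (emp s) (a i)) *
          ∑ s', (∏ i, P (s i) (a i) (emp s) (emp a) (s' i)) *
            l1 (fun x => emp s' x - PMF' P μt (πb t) x)
      ≤ ∑ s, Wproc P πb x₀ t s *
        ((2 * Real.sqrt (Fintype.card X) / Real.sqrt N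
            + L_P * (Real.sqrt (Fintype.card U) / Real.sqrt N))
          + ((1 + L_Q) + L_P * (2 + L_Q)) * l1 (fun x => emp s x - μt x)) :=
        Finset.sum_le_sum fun s _ => mul_le_mul_of_nonneg_left (key s) (hWnn t s)
    _ = (2 * Real.sqrt (Fintype.card X) / Real.sqrt N
          + L_P * (Real.sqrt (Fintype.card U) / Real.sqrt N))
        + ((1 + L_Q) + L_P * (2 + L_Q)) *
            ∑ s, Wproc P πb x₀ t s * l1 (fun x => emp s x - μt x) := by
        have e : ∀ s : Fin N → X, Wproc P πb x₀ t s *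
            ((2 * Real.sqrt (Fintype.card X) / Real.sqrt N
                + L_P * (Real.sqrt (Fintype.card U) / Real.sqrt N))
              + ((1 + L_Q) + L_P * (2 + L_Q)) * l1 (fun x => emp s x - μt x))
            = (2 * Real.sqrt (Fintype.card X) / Real.sqrt N
                + L_P * (Real.sqrt (Fintype.card U) / Real.sqrt N)) * Wproc P πb x₀ t s
              + ((1 + L_Q) + L_P * (2 + L_Q)) *
                  (Wproc P πb x₀ t s * l1 (fun x => emp s x - μt x)) := by
          intro s; ring
        rw [Finset.sum_congr rfl fun s _ => e s, Finset.sum_add_distrib,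
          ← Finset.mul_sum, ← Finset.mul_sum, hW1 t, mul_one]

lemma reward_error_step (hN : 0 < N) {M_R L_R L_Q : ℝ}
    (hMR : 0 ≤ M_R) (hLR : 0 ≤ L_R) (hLQ : 0 ≤ L_Q)
    (r : X → U → (X → ℝ) → (U → ℝ) → ℝ)
    (hbdd : ∀ x u μ ν, IsPmf μ → IsPmf ν → |r x u μ ν| ≤ M_R)
    (hrLip : ∀ x u μ₁ μ₂ ν₁ ν₂, IsPmf μ₁ → IsPmf μ₂ → IsPmf ν₁ → IsPmf ν₂ →
      |r x u μ₁ ν₁ - r x u μ₂ ν₂|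
        ≤ L_R * (l1 (fun x' => μ₁ x' - μ₂ x') + l1 (fun u' => ν₁ u' - ν₂ u')))
    (P : X → U → (X → ℝ) → (U → ℝ) → X → ℝ)
    (hP : ∀ x u μ ν, IsPmf μ → IsPmf ν → IsPmf (P x u μ ν))
    (πb : ℕ → X → (X → ℝ) → U → ℝ)
    (hπ : ∀ t x μ, IsPmf μ → IsPmf (πb t x μ))
    (hπLip : ∀ t x μ₁ μ₂, IsPmf μ₁ → IsPmf μ₂ →
      l1 (fun u => πb t x μ₁ u - πb t x μ₂ u) ≤ L_Q * l1 (fun x' => μ₁ x' - μ₂ x'))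
    (x₀ : Fin N → X) (μt : X → ℝ) (hμt : IsPmf μt) (t : ℕ) :
    |(∑ s, Wproc P πb x₀ t s * ∑ a : Fin N → U, (∏ i, πb t (s i) (emp s) (a i)) *
        ((1 / N : ℝ) * ∑ i, r (s i) (a i) (emp s) (emp a))) - rMF r μt (πb t)|
      ≤ L_R * (Real.sqrt (Fintype.card U) / Real.sqrt N)
        + ((M_R + 2 * L_R) + L_Q * (M_R + L_R)) *
            ∑ s, Wproc P πb x₀ t s * l1 (fun x => emp s x - μt x) := by
  have hW1 := Wproc_sum (x₀ := x₀) hN hP hπ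
  have hWnn := Wproc_nonneg (x₀ := x₀) hN hP hπ
  have hNne : (N:ℝ) ≠ 0 := Nat.cast_ne_zero.mpr hN.ne'
  have hπμ : ∀ x, IsPmf (πb t x μt) := fun x => hπ t x μt hμt
  have hνp : IsPmf (nuMF μt (πb t)) := isPmf_nuMF hμt hπμ
  have hbdd' : ∀ x u, |r x u μt (nuMF μt (πb t))| ≤ M_R :=
    fun x u => hbdd x u μt _ hμt hνp
  have key : ∀ s : Fin N → X,
      |(∑ a : Fin N → U, (∏ i, πb t (s i) (emp s) (a i)) *
          ((1 / N : ℝ) * ∑ i, r (s i) (a i) (emp s) (emp a))) - rMF r μt (πb t)|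
      ≤ L_R * (Real.sqrt (Fintype.card U) / Real.sqrt N)
        + ((M_R + 2 * L_R) + L_Q * (M_R + L_R)) * l1 (fun x => emp s x - μt x) := by
    intro s
    have hemp := isPmf_emp hN s
    have hq : ∀ i, IsPmf (πb t (s i) (emp s)) := fun i => hπ t _ _ hemp
    have hPinn : ∀ a : Fin N → U, 0 ≤ ∏ i, πb t (s i) (emp s) (a i) :=
      fun a => Finset.prod_nonneg fun i _ => (hq i).1 _
    have hPi1 : ∑ a : Fin N → U, ∏ i, πb t (s i) (emp s) (a i) = 1 :=
      sum_pi_prod _ fun i => (hq i).2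
    have hl1s : 0 ≤ l1 (fun x => emp s x - μt x) := l1_nonneg _
    have hG2 := reward_close_fixed hN hMR hLQ r (πb t) (fun x ρ hρ => hπ t x ρ hρ)
      (fun x ρ₁ ρ₂ h1 h2 => hπLip t x ρ₁ ρ₂ h1 h2) μt hμt hbdd' s
    have hGdiff : |(∑ a : Fin N → U, (∏ i, πb t (s i) (emp s) (a i)) *
          ((1 / N : ℝ) * ∑ i, r (s i) (a i) (emp s) (emp a)))
        - (∑ a : Fin N → U, (∏ i, πb t (s i) (emp s) (a i)) *
          ((1 / N : ℝ) * ∑ i, r (s i) (a i) μt (nuMF μt (πb t))))|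
        ≤ L_R * l1 (fun x => emp s x - μt x)
          + L_R * (Real.sqrt (Fintype.card U) / Real.sqrt N
            + (1 + L_Q) * l1 (fun x => emp s x - μt x)) := by
      have e : (∑ a : Fin N → U, (∏ i, πb t (s i) (emp s) (a i)) *
            ((1 / N : ℝ) * ∑ i, r (s i) (a i) (emp s) (emp a)))
          - (∑ a : Fin N → U, (∏ i, πb t (s i) (emp s) (a i)) *
            ((1 / N : ℝ) * ∑ i, r (s i) (a i) μt (nuMF μt (πb t))))
          = ∑ a : Fin N → U, (∏ i, πb t (s i) (emp s) (a i)) *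
            ((1 / N : ℝ) * ∑ i, (r (s i) (a i) (emp s) (emp a)
              - r (s i) (a i) μt (nuMF μt (πb t)))) := by
        rw [← Finset.sum_sub_distrib]
        apply Finset.sum_congr rfl; intro a _
        rw [Finset.sum_sub_distrib]
        ring
      rw [e]
      have per_a : ∀ a : Fin N → U, |(∏ i, πb t (s i) (emp s) (a i)) *
          ((1 / N : ℝ) * ∑ i, (r (s i) (a i) (emp s) (emp a)
            - r (s i) (a i) μt (nuMF μt (πb t))))|
          ≤ (∏ i, πb t (s i) (emp s) (a i)) *
            (L_R * (l1 (fun x => emp s x - μt x)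
              + l1 (fun u => emp a u - nuMF μt (πb t) u))) := by
        intro a
        have hea := isPmf_emp hN a
        rw [abs_mul, abs_of_nonneg (hPinn a)]
        apply mul_le_mul_of_nonneg_left _ (hPinn a)
        rw [abs_mul, abs_of_nonneg (by positivity : (0:ℝ) ≤ 1/(N:ℝ))]
        calc (1/(N:ℝ)) * |∑ i, (r (s i) (a i) (emp s) (emp a)
              - r (s i) (a i) μt (nuMF μt (πb t)))|
            ≤ (1/(N:ℝ)) * ∑ i, |r (s i) (a i) (emp s) (emp a)
              - r (s i) (a i) μt (nuMF μt (πb t))| :=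
              mul_le_mul_of_nonneg_left (Finset.abs_sum_le_sum_abs _ _) (by positivity)
          _ ≤ (1/(N:ℝ)) * ∑ _i : Fin N, L_R * (l1 (fun x => emp s x - μt x)
              + l1 (fun u => emp a u - nuMF μt (πb t) u)) := by
              apply mul_le_mul_of_nonneg_left _ (by positivity)
              exact Finset.sum_le_sum fun i _ =>
                hrLip (s i) (a i) (emp s) μt (emp a) (nuMF μt (πb t)) hemp hμt hea hνp
          _ = L_R * (l1 (fun x => emp s x - μt x)
              + l1 (fun u => emp a u - nuMF μt (πb t) u)) := by
              rw [Finset.sum_const, Finset.card_univ, Fintype.card_fin, nsmul_eq_mul]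
              field_simp
      calc |∑ a : Fin N → U, (∏ i, πb t (s i) (emp s) (a i)) *
            ((1 / N : ℝ) * ∑ i, (r (s i) (a i) (emp s) (emp a)
              - r (s i) (a i) μt (nuMF μt (πb t))))|
          ≤ ∑ a : Fin N → U, (∏ i, πb t (s i) (emp s) (a i)) *
            (L_R * (l1 (fun x => emp s x - μt x)
              + l1 (fun u => emp a u - nuMF μt (πb t) u))) :=
            (Finset.abs_sum_le_sum_abs _ _).trans (Finset.sum_le_sum fun a _ => per_a a)
        _ = L_R * l1 (fun x => emp s x - μt x)
            + L_R * ∑ a : Fin N → U, (∏ i, πb t (s i) (emp s) (a i)) *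
              l1 (fun u => emp a u - nuMF μt (πb t) u) := by
            have e2 : ∀ a : Fin N → U, (∏ i, πb t (s i) (emp s) (a i)) *
                (L_R * (l1 (fun x => emp s x - μt x)
                  + l1 (fun u => emp a u - nuMF μt (πb t) u)))
                = (L_R * l1 (fun x => emp s x - μt x)) * (∏ i, πb t (s i) (emp s) (a i))
                  + L_R * ((∏ i, πb t (s i) (emp s) (a i)) *
                    l1 (fun u => emp a u - nuMF μt (πb t) u)) := by
              intro a; ring
            rw [Finset.sum_congr rfl fun a _ => e2 a, Finset.sum_add_distrib,
              ← Finset.mul_sum, ← Finset.mul_sum, hPi1, mul_one]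
        _ ≤ L_R * l1 (fun x => emp s x - μt x)
            + L_R * (Real.sqrt (Fintype.card U) / Real.sqrt N
              + (1 + L_Q) * l1 (fun x => emp s x - μt x)) := by
            apply add_le_add le_rfl
            exact mul_le_mul_of_nonneg_left
              (action_sampling hN hLQ (πb t) (fun x ρ hρ => hπ t x ρ hρ)
                (fun x ρ₁ ρ₂ h1 h2 => hπLip t x ρ₁ ρ₂ h1 h2) μt hμt s) hLR
    calc |(∑ a : Fin N → U, (∏ i, πb t (s i) (emp s) (a i)) *
          ((1 / N : ℝ) * ∑ i, r (s i) (a i) (emp s) (emp a))) - rMF r μt (πb t)|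
        ≤ |(∑ a : Fin N → U, (∏ i, πb t (s i) (emp s) (a i)) *
            ((1 / N : ℝ) * ∑ i, r (s i) (a i) (emp s) (emp a)))
          - (∑ a : Fin N → U, (∏ i, πb t (s i) (emp s) (a i)) *
            ((1 / N : ℝ) * ∑ i, r (s i) (a i) μt (nuMF μt (πb t))))|
          + |(∑ a : Fin N → U, (∏ i, πb t (s i) (emp s) (a i)) *
            ((1 / N : ℝ) * ∑ i, r (s i) (a i) μt (nuMF μt (πb t)))) - rMF r μt (πb t)| :=
          abs_sub_le _ _ _
      _ ≤ (L_R * l1 (fun x => emp s x - μt x)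
            + L_R * (Real.sqrt (Fintype.card U) / Real.sqrt N
              + (1 + L_Q) * l1 (fun x => emp s x - μt x)))
          + M_R * (1 + L_Q) * l1 (fun x => emp s x - μt x) := add_le_add hGdiff hG2
      _ = L_R * (Real.sqrt (Fintype.card U) / Real.sqrt N)
          + ((M_R + 2 * L_R) + L_Q * (M_R + L_R)) * l1 (fun x => emp s x - μt x) := by
          ring
  have hsub : (∑ s, Wproc P πb x₀ t s * ∑ a : Fin N → U,
        (∏ i, πb t (s i) (emp s) (a i)) *
          ((1 / N : ℝ) * ∑ i, r (s i) (a i) (emp s) (emp a))) - rMF r μt (πb t)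
      = ∑ s, Wproc P πb x₀ t s * ((∑ a : Fin N → U, (∏ i, πb t (s i) (emp s) (a i)) *
          ((1 / N : ℝ) * ∑ i, r (s i) (a i) (emp s) (emp a))) - rMF r μt (πb t)) := by
    rw [Finset.sum_congr rfl fun s (_ : s ∈ Finset.univ) => mul_sub (Wproc P πb x₀ t s) _ _,
      Finset.sum_sub_distrib, ← Finset.sum_mul, hW1 t, one_mul]
  rw [hsub]
  calc |∑ s, Wproc P πb x₀ t s * ((∑ a : Fin N → U, (∏ i, πb t (s i) (emp s) (a i)) *
          ((1 / N : ℝ) * ∑ i, r (s i) (a i) (emp s) (emp a))) - rMF r μt (πb t))|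
      ≤ ∑ s, Wproc P πb x₀ t s * |(∑ a : Fin N → U, (∏ i, πb t (s i) (emp s) (a i)) *
          ((1 / N : ℝ) * ∑ i, r (s i) (a i) (emp s) (emp a))) - rMF r μt (πb t)| := by
        refine (Finset.abs_sum_le_sum_abs _ _).trans ?_
        apply Finset.sum_le_sum; intro s _
        rw [abs_mul, abs_of_nonneg (hWnn t s)]
    _ ≤ ∑ s, Wproc P πb x₀ t s * (L_R * (Real.sqrt (Fintype.card U) / Real.sqrt N)
          + ((M_R + 2 * L_R) + L_Q * (M_R + L_R)) * l1 (fun x => emp s x - μt x)) :=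
        Finset.sum_le_sum fun s _ => mul_le_mul_of_nonneg_left (key s) (hWnn t s)
    _ = L_R * (Real.sqrt (Fintype.card U) / Real.sqrt N)
        + ((M_R + 2 * L_R) + L_Q * (M_R + L_R)) *
            ∑ s, Wproc P πb x₀ t s * l1 (fun x => emp s x - μt x) := by
        have e : ∀ s : Fin N → X, Wproc P πb x₀ t s *
            (L_R * (Real.sqrt (Fintype.card U) / Real.sqrt N)
              + ((M_R + 2 * L_R) + L_Q * (M_R + L_R)) * l1 (fun x => emp s x - μt x))
            = (L_R * (Real.sqrt (Fintype.card U) / Real.sqrt N)) * Wproc P πb x₀ t s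
              + ((M_R + 2 * L_R) + L_Q * (M_R + L_R)) *
                  (Wproc P πb x₀ t s * l1 (fun x => emp s x - μt x)) := by
          intro s; ring
        rw [Finset.sum_congr rfl fun s _ => e s, Finset.sum_add_distrib,
          ← Finset.mul_sum, ← Finset.mul_sum, hW1 t, mul_one]

lemma Rterm_bdd (hN : 0 < N) {M_R : ℝ} (hMR : 0 ≤ M_R)
    (r : X → U → (X → ℝ) → (U → ℝ) → ℝ)
    (hbdd : ∀ x u μ ν, IsPmf μ → IsPmf ν → |r x u μ ν| ≤ M_R)
    (P : X → U → (X → ℝ) → (U → ℝ) → X → ℝ)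
    (hP : ∀ x u μ ν, IsPmf μ → IsPmf ν → IsPmf (P x u μ ν))
    (πb : ℕ → X → (X → ℝ) → U → ℝ)
    (hπ : ∀ t x μ, IsPmf μ → IsPmf (πb t x μ))
    (x₀ : Fin N → X) (t : ℕ) :
    |∑ s, Wproc P πb x₀ t s * ∑ a : Fin N → U, (∏ i, πb t (s i) (emp s) (a i)) *
        ((1 / N : ℝ) * ∑ i, r (s i) (a i) (emp s) (emp a))| ≤ M_R := by
  have hW1 := Wproc_sum (x₀ := x₀) hN hP hπ
  have hWnn := Wproc_nonneg (x₀ := x₀) hN hP hπ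
  have hNne : (N:ℝ) ≠ 0 := Nat.cast_ne_zero.mpr hN.ne'
  have key : ∀ s : Fin N → X, |∑ a : Fin N → U, (∏ i, πb t (s i) (emp s) (a i)) *
      ((1 / N : ℝ) * ∑ i, r (s i) (a i) (emp s) (emp a))| ≤ M_R := by
    intro s
    have hemp := isPmf_emp hN s
    have hq : ∀ i, IsPmf (πb t (s i) (emp s)) := fun i => hπ t _ _ hemp
    have hPinn : ∀ a : Fin N → U, 0 ≤ ∏ i, πb t (s i) (emp s) (a i) :=
      fun a => Finset.prod_nonneg fun i _ => (hq i).1 _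
    have hPi1 : ∑ a : Fin N → U, ∏ i, πb t (s i) (emp s) (a i) = 1 :=
      sum_pi_prod _ fun i => (hq i).2
    have inner : ∀ a : Fin N → U,
        |(1 / N : ℝ) * ∑ i, r (s i) (a i) (emp s) (emp a)| ≤ M_R := by
      intro a
      have hea := isPmf_emp hN a
      rw [abs_mul, abs_of_nonneg (by positivity : (0:ℝ) ≤ 1/(N:ℝ))]
      calc (1/(N:ℝ)) * |∑ i, r (s i) (a i) (emp s) (emp a)|
          ≤ (1/(N:ℝ)) * ∑ i, |r (s i) (a i) (emp s) (emp a)| :=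
            mul_le_mul_of_nonneg_left (Finset.abs_sum_le_sum_abs _ _) (by positivity)
        _ ≤ (1/(N:ℝ)) * ∑ _i : Fin N, M_R := by
            apply mul_le_mul_of_nonneg_left _ (by positivity)
            exact Finset.sum_le_sum fun i _ => hbdd _ _ _ _ hemp hea
        _ = M_R := by
            rw [Finset.sum_const, Finset.card_univ, Fintype.card_fin, nsmul_eq_mul]
            field_simp
    calc |∑ a : Fin N → U, (∏ i, πb t (s i) (emp s) (a i)) *
        ((1 / N : ℝ) * ∑ i, r (s i) (a i) (emp s) (emp a))|
        ≤ ∑ a : Fin N → U, (∏ i, πb t (s i) (emp s) (a i)) * M_R := by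
          refine (Finset.abs_sum_le_sum_abs _ _).trans ?_
          apply Finset.sum_le_sum; intro a _
          rw [abs_mul, abs_of_nonneg (hPinn a)]
          exact mul_le_mul_of_nonneg_left (inner a) (hPinn a)
      _ = M_R := by rw [← Finset.sum_mul, hPi1, one_mul]
  calc |∑ s, Wproc P πb x₀ t s * ∑ a : Fin N → U, (∏ i, πb t (s i) (emp s) (a i)) *
      ((1 / N : ℝ) * ∑ i, r (s i) (a i) (emp s) (emp a))|
      ≤ ∑ s, Wproc P πb x₀ t s * M_R := by
        refine (Finset.abs_sum_le_sum_abs _ _).trans ?_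
        apply Finset.sum_le_sum; intro s _
        rw [abs_mul, abs_of_nonneg (hWnn t s)]
        exact mul_le_mul_of_nonneg_left (key s) (hWnn t s)
    _ = M_R := by rw [← Finset.sum_mul, hW1 t, one_mul]

end glob
/-- Key approximation bound: if the two admissible policy sequences `π*` and `π̄`
induce identical mean-field flows and action choices in the infinite-agent system
(e.g. `π̄` is a localization of `π*`), then the `N`-agent value of `π̄` is close to the
mean-field value of `π*`. -/
theorem vMARL_close_to_vMF
    {X U : Type*} [Fintype X] [Fintype U] [DecidableEq X] [DecidableEq U]
    (N : ℕ) (hN : 0 < N)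
    (M_R L_R L_P L_Q γ : ℝ)
    (hMR : 0 < M_R) (hLR : 0 < L_R) (hLP : 0 < L_P) (hLQ : 0 < L_Q)
    (hγ0 : 0 ≤ γ) (hγ1 : γ < 1)
    (hγSP : γ * ((1 + 2 * L_P) + L_Q * (1 + L_P)) < 1)
    (r : X → U → (X → ℝ) → (U → ℝ) → ℝ)
    (hbdd : ∀ x u μ ν, IsPmf μ → IsPmf ν → |r x u μ ν| ≤ M_R)
    (hrLip : ∀ x u μ₁ μ₂ ν₁ ν₂, IsPmf μ₁ → IsPmf μ₂ → IsPmf ν₁ → IsPmf ν₂ →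
      |r x u μ₁ ν₁ - r x u μ₂ ν₂|
        ≤ L_R * (l1 (fun x' => μ₁ x' - μ₂ x') + l1 (fun u' => ν₁ u' - ν₂ u')))
    (P : X → U → (X → ℝ) → (U → ℝ) → X → ℝ)
    (hP : ∀ x u μ ν, IsPmf μ → IsPmf ν → IsPmf (P x u μ ν))
    (hPLip : ∀ x u μ₁ μ₂ ν₁ ν₂, IsPmf μ₁ → IsPmf μ₂ → IsPmf ν₁ → IsPmf ν₂ →
      l1 (fun y => P x u μ₁ ν₁ y - P x u μ₂ ν₂ y)
        ≤ L_P * (l1 (fun x' => μ₁ x' - μ₂ x') + l1 (fun u' => ν₁ u' - ν₂ u')))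
    (πstar πbar : ℕ → X → (X → ℝ) → U → ℝ)
    (hπs : ∀ t x μ, IsPmf μ → IsPmf (πstar t x μ))
    (hπsLip : ∀ t x μ₁ μ₂, IsPmf μ₁ → IsPmf μ₂ →
      l1 (fun u => πstar t x μ₁ u - πstar t x μ₂ u) ≤ L_Q * l1 (fun x' => μ₁ x' - μ₂ x'))
    (hπb : ∀ t x μ, IsPmf μ → IsPmf (πbar t x μ))
    (hπbLip : ∀ t x μ₁ μ₂, IsPmf μ₁ → IsPmf μ₂ →
      l1 (fun u => πbar t x μ₁ u - πbar t x μ₂ u) ≤ L_Q * l1 (fun x' => μ₁ x' - μ₂ x'))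
    (x₀ : Fin N → X) (μ₀ : X → ℝ) (hμ₀ : μ₀ = emp x₀)
    -- the two sequences induce identical mean-field flows and action choices:
    (hflow : ∀ t, muFlow P πbar μ₀ t = muFlow P πstar μ₀ t)
    (hagree : ∀ t x, πbar t x (muFlow P πstar μ₀ t) = πstar t x (muFlow P πstar μ₀ t)) :
    |vMARL γ r P πbar x₀ - vMF γ r P πstar μ₀|
      ≤ (1 / (1 - γ)) * (M_R + L_R * Real.sqrt (Fintype.card U)) / Real.sqrt N
        + ((Real.sqrt (Fintype.card X) + Real.sqrt (Fintype.card U)) / Real.sqrt N) *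
            (((M_R + 2 * L_R) + L_Q * (M_R + L_R)) * (2 + L_P) /
              (((1 + 2 * L_P) + L_Q * (1 + L_P)) - 1)) *
            (1 / (1 - γ * ((1 + 2 * L_P) + L_Q * (1 + L_P))) - 1 / (1 - γ)) := by
  classical
  have hμ0 : IsPmf μ₀ := by rw [hμ₀]; exact isPmf_emp hN x₀
  set μ : ℕ → X → ℝ := muFlow P πbar μ₀ with hμdef
  have hμt : ∀ t, IsPmf (μ t) := by
    intro t
    induction t with
    | zero => exact hμ0
    | succ t ih =>
      have h : μ (t+1) = PMF' P (μ t) (πbar t) := rfl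
      rw [h]
      exact isPmf_PMF' ih (fun x => hπb t x _ ih)
        (fun x u => hP x u _ _ ih (isPmf_nuMF ih (fun x' => hπb t x' _ ih)))
  have hsqN : 0 < Real.sqrt N := Real.sqrt_pos.mpr (Nat.cast_pos.mpr hN)
  have hsqX : (0:ℝ) ≤ Real.sqrt (Fintype.card X) := Real.sqrt_nonneg _
  have hsqU : (0:ℝ) ≤ Real.sqrt (Fintype.card U) := Real.sqrt_nonneg _
  set SP : ℝ := (1 + 2 * L_P) + L_Q * (1 + L_P) with hSPdef
  have hSP1 : 1 < SP := by
    rw [hSPdef]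
    nlinarith [mul_pos hLQ (show (0:ℝ) < 1 + L_P by linarith)]
  have hSPne : SP - 1 ≠ 0 := by linarith
  set D : ℝ := 2 * Real.sqrt (Fintype.card X) / Real.sqrt N
      + L_P * (Real.sqrt (Fintype.card U) / Real.sqrt N) with hDdef
  have hD0 : 0 ≤ D := by
    rw [hDdef]; positivity
  set e : ℕ → ℝ := fun t =>
    ∑ s, Wproc P πbar x₀ t s * l1 (fun x => emp s x - μ t x) with hedef
  have he0 : e 0 = 0 := by
    rw [hedef]
    show ∑ s : Fin N → X, (if s = x₀ then (1:ℝ) else 0) * l1 (fun x => emp s x - μ 0 x) = 0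
    rw [Finset.sum_eq_single x₀]
    · have : μ 0 = emp x₀ := hμ₀
      rw [this]
      simp [l1]
    · intro s _ hs; rw [if_neg hs, zero_mul]
    · intro h; exact absurd (Finset.mem_univ x₀) h
  have henn : ∀ t, 0 ≤ e t := by
    intro t
    rw [hedef]
    exact Finset.sum_nonneg fun s _ =>
      mul_nonneg (Wproc_nonneg (x₀ := x₀) hN hP hπb t s) (l1_nonneg _)
  have erec : ∀ t, e (t+1) ≤ D + SP * e t := by
    intro t
    have h := e_step hN hLP.le hLQ.le P hP hPLip πbar hπb hπbLip x₀ (μ t) (hμt t) t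
    have hc : (1 + L_Q) + L_P * (2 + L_Q) = SP := by rw [hSPdef]; ring
    rw [hc] at h
    rw [← hDdef] at h
    exact h
  have ebound : ∀ t, e t ≤ D * ∑ k ∈ Finset.range t, SP^k := by
    intro t
    induction t with
    | zero => rw [he0]; simp
    | succ t ih =>
      have hSPnn : (0:ℝ) ≤ SP := by linarith
      calc e (t+1) ≤ D + SP * e t := erec t
        _ ≤ D + SP * (D * ∑ k ∈ Finset.range t, SP^k) := by
            refine add_le_add le_rfl (mul_le_mul_of_nonneg_left ih hSPnn)
        _ = D * ∑ k ∈ Finset.range (t+1), SP^k := by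
            have hgs : ∑ k ∈ Finset.range (t+1), SP^k
                = SP * ∑ k ∈ Finset.range t, SP^k + 1 := by
              rw [Finset.sum_range_succ', pow_zero, Finset.mul_sum]
              congr 1
              apply Finset.sum_congr rfl; intro k _
              rw [pow_succ]; ring
            rw [hgs]
            ring
  have hνt : ∀ t, IsPmf (nuMF (μ t) (πbar t)) :=
    fun t => isPmf_nuMF (hμt t) (fun x => hπb t x _ (hμt t))
  set SR : ℝ := (M_R + 2 * L_R) + L_Q * (M_R + L_R) with hSRdef
  have hSR0 : 0 ≤ SR := by rw [hSRdef]; nlinarith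
  set Rt : ℕ → ℝ := fun t => ∑ s, Wproc P πbar x₀ t s *
    ∑ a : Fin N → U, (∏ i, πbar t (s i) (emp s) (a i)) *
      ((1 / N : ℝ) * ∑ i, r (s i) (a i) (emp s) (emp a)) with hRtdef
  have hRerr : ∀ t, |Rt t - rMF r (μ t) (πbar t)|
      ≤ L_R * (Real.sqrt (Fintype.card U) / Real.sqrt N) + SR * e t := by
    intro t
    have h := reward_error_step hN hMR.le hLR.le hLQ.le r hbdd hrLip P hP
      πbar hπb hπbLip x₀ (μ t) (hμt t) t
    rw [← hSRdef] at h
    exact h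
  have hRb : ∀ t, |Rt t| ≤ M_R :=
    fun t => Rterm_bdd hN hMR.le r hbdd P hP πbar hπb x₀ t
  have hMFb : ∀ t, |rMF r (μ t) (πbar t)| ≤ M_R :=
    fun t => rMF_bdd hMR.le r (hμt t) (fun x => hπb t x _ (hμt t))
      (fun x u => hbdd x u _ _ (hμt t) (hνt t))
  have hagree' : ∀ t x, πbar t x (μ t) = πstar t x (μ t) := by
    intro t x
    have h : μ t = muFlow P πstar μ₀ t := hflow t
    rw [h]
    exact hagree t x
  have hrMFeq : ∀ t, rMF r (muFlow P πstar μ₀ t) (πstar t) = rMF r (μ t) (πbar t) := by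
    intro t
    rw [show muFlow P πstar μ₀ t = μ t from (hflow t).symm]
    have hnu : nuMF (μ t) (πstar t) = nuMF (μ t) (πbar t) := by
      unfold nuMF
      funext u
      apply Finset.sum_congr rfl; intro x _
      rw [hagree' t x]
    unfold rMF
    rw [hnu]
    apply Finset.sum_congr rfl; intro x _
    apply Finset.sum_congr rfl; intro u _
    rw [hagree' t x]
  have hvM : vMARL γ r P πbar x₀ = ∑' t, γ^t * Rt t := rfl
  have hvF : vMF γ r P πstar μ₀ = ∑' t, γ^t * rMF r (μ t) (πbar t) :=
    tsum_congr fun t => by rw [hrMFeq t]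
  have hγt : ∀ t : ℕ, (0:ℝ) ≤ γ^t := fun t => pow_nonneg hγ0 t
  have hγSP0 : 0 ≤ γ * SP := mul_nonneg hγ0 (by linarith)
  have hγSP1 : γ * SP < 1 := hγSP
  have hsum1 : Summable (fun t => γ^t * Rt t) := by
    apply Summable.of_norm_bounded (g := fun t => M_R * γ^t)
      ((summable_geometric_of_lt_one hγ0 hγ1).mul_left M_R)
    intro t
    rw [Real.norm_eq_abs, abs_mul, abs_of_nonneg (hγt t), mul_comm]
    exact mul_le_mul_of_nonneg_right (hRb t) (hγt t)
  have hsum2 : Summable (fun t => γ^t * rMF r (μ t) (πbar t)) := by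
    apply Summable.of_norm_bounded (g := fun t => M_R * γ^t)
      ((summable_geometric_of_lt_one hγ0 hγ1).mul_left M_R)
    intro t
    rw [Real.norm_eq_abs, abs_mul, abs_of_nonneg (hγt t), mul_comm]
    exact mul_le_mul_of_nonneg_right (hMFb t) (hγt t)
  set A : ℝ := (M_R + L_R * Real.sqrt (Fintype.card U)) / Real.sqrt N with hA
  set B : ℝ := SR * D / (SP - 1) with hB
  have hgeom : ∀ t, ∑ k ∈ Finset.range t, SP^k = (SP^t - 1)/(SP - 1) :=
    fun t => geom_sum_eq (by linarith : SP ≠ 1) t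
  have hptwise : ∀ t, |γ^t * (Rt t - rMF r (μ t) (πbar t))|
      ≤ A * γ^t + B * ((γ*SP)^t - γ^t) := by
    intro t
    rw [abs_mul, abs_of_nonneg (hγt t)]
    have h1 : |Rt t - rMF r (μ t) (πbar t)| ≤ A + SR * (D * ((SP^t - 1)/(SP-1))) := by
      refine (hRerr t).trans ?_
      have hAle : L_R * (Real.sqrt (Fintype.card U) / Real.sqrt N) ≤ A := by
        rw [hA]
        rw [show L_R * (Real.sqrt (Fintype.card U) / Real.sqrt N)
          = (L_R * Real.sqrt (Fintype.card U)) / Real.sqrt N by ring]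
        apply div_le_div_of_nonneg_right _ (by positivity)
        linarith
      have hSRe : SR * e t ≤ SR * (D * ((SP^t - 1)/(SP-1))) := by
        apply mul_le_mul_of_nonneg_left _ hSR0
        refine (ebound t).trans ?_
        rw [hgeom t]
      linarith
    calc γ^t * |Rt t - rMF r (μ t) (πbar t)|
        ≤ γ^t * (A + SR * (D * ((SP^t - 1)/(SP-1)))) :=
          mul_le_mul_of_nonneg_left h1 (hγt t)
      _ = A * γ^t + B * ((γ*SP)^t - γ^t) := by
          rw [hB, mul_pow]
          field_simp
  have hsb : Summable (fun t => A * γ^t + B * ((γ*SP)^t - γ^t)) := by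
    apply Summable.add
    · exact (summable_geometric_of_lt_one hγ0 hγ1).mul_left A
    · exact (((summable_geometric_of_lt_one hγSP0 hγSP1).sub
        (summable_geometric_of_lt_one hγ0 hγ1))).mul_left B
  rw [hvM, hvF, ← Summable.tsum_sub hsum1 hsum2]
  have hsummand : ∀ t, ‖γ^t * Rt t - γ^t * rMF r (μ t) (πbar t)‖
      ≤ A * γ^t + B * ((γ*SP)^t - γ^t) := by
    intro t
    rw [Real.norm_eq_abs, ← mul_sub]
    exact hptwise t
  have hnorm_summable : Summable (fun t => ‖γ^t * Rt t - γ^t * rMF r (μ t) (πbar t)‖) :=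
    Summable.of_nonneg_of_le (fun t => norm_nonneg _) hsummand hsb
  have step1 : |∑' t, (γ^t * Rt t - γ^t * rMF r (μ t) (πbar t))|
      ≤ ∑' t, (A * γ^t + B * ((γ*SP)^t - γ^t)) := by
    calc |∑' t, (γ^t * Rt t - γ^t * rMF r (μ t) (πbar t))|
        = ‖∑' t, (γ^t * Rt t - γ^t * rMF r (μ t) (πbar t))‖ := (Real.norm_eq_abs _).symm
      _ ≤ ∑' t, ‖γ^t * Rt t - γ^t * rMF r (μ t) (πbar t)‖ :=
          norm_tsum_le_tsum_norm hnorm_summable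
      _ ≤ ∑' t, (A * γ^t + B * ((γ*SP)^t - γ^t)) :=
          Summable.tsum_le_tsum hsummand hnorm_summable hsb
  refine step1.trans ?_
  have tsum_eval : ∑' t, (A * γ^t + B * ((γ*SP)^t - γ^t))
      = A * (1-γ)⁻¹ + B * ((1-γ*SP)⁻¹ - (1-γ)⁻¹) := by
    rw [Summable.tsum_add ((summable_geometric_of_lt_one hγ0 hγ1).mul_left A)
      ((((summable_geometric_of_lt_one hγSP0 hγSP1).sub
        (summable_geometric_of_lt_one hγ0 hγ1))).mul_left B),
      tsum_mul_left, tsum_mul_left,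
      Summable.tsum_sub (summable_geometric_of_lt_one hγSP0 hγSP1)
        (summable_geometric_of_lt_one hγ0 hγ1),
      tsum_geometric_of_lt_one hγ0 hγ1, tsum_geometric_of_lt_one hγSP0 hγSP1]
  rw [tsum_eval]
  have hΔ : 0 ≤ (1-γ*SP)⁻¹ - (1-γ)⁻¹ := by
    have h1 : (0:ℝ) < 1 - γ*SP := by linarith
    have h2 : 1 - γ*SP ≤ 1 - γ := by nlinarith
    have := one_div_le_one_div_of_le h1 h2
    rw [one_div, one_div] at this
    linarith
  have hDle : D ≤ (2 + L_P) * ((Real.sqrt (Fintype.card X)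
      + Real.sqrt (Fintype.card U)) / Real.sqrt N) := by
    rw [hDdef]
    rw [show 2 * Real.sqrt (Fintype.card X) / Real.sqrt N
        + L_P * (Real.sqrt (Fintype.card U) / Real.sqrt N)
      = (2 * Real.sqrt (Fintype.card X) + L_P * Real.sqrt (Fintype.card U)) / Real.sqrt N
      by ring]
    rw [show (2 + L_P) * ((Real.sqrt (Fintype.card X)
        + Real.sqrt (Fintype.card U)) / Real.sqrt N)
      = ((2 + L_P) * (Real.sqrt (Fintype.card X) + Real.sqrt (Fintype.card U))) / Real.sqrt N
      by ring]
    apply div_le_div_of_nonneg_right _ (by positivity)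
    nlinarith [mul_nonneg hLP.le hsqX]
  have hBle : B * ((1-γ*SP)⁻¹ - (1-γ)⁻¹)
      ≤ ((Real.sqrt (Fintype.card X) + Real.sqrt (Fintype.card U)) / Real.sqrt N) *
          (SR * (2 + L_P) / (SP - 1)) * ((1-γ*SP)⁻¹ - (1-γ)⁻¹) := by
    apply mul_le_mul_of_nonneg_right _ hΔ
    rw [hB]
    rw [show ((Real.sqrt (Fintype.card X) + Real.sqrt (Fintype.card U)) / Real.sqrt N) *
        (SR * (2 + L_P) / (SP - 1))
      = SR * ((2 + L_P) * ((Real.sqrt (Fintype.card X)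
          + Real.sqrt (Fintype.card U)) / Real.sqrt N)) / (SP - 1) by ring]
    apply div_le_div_of_nonneg_right _ (by linarith : (0:ℝ) ≤ SP - 1)
    exact mul_le_mul_of_nonneg_left hDle hSR0
  have hfirst : A * (1-γ)⁻¹
      = 1 / (1 - γ) * (M_R + L_R * Real.sqrt (Fintype.card U)) / Real.sqrt N := by
    rw [hA]; ring
  calc A * (1-γ)⁻¹ + B * ((1-γ*SP)⁻¹ - (1-γ)⁻¹)
      ≤ A * (1-γ)⁻¹
        + ((Real.sqrt (Fintype.card X) + Real.sqrt (Fintype.card U)) / Real.sqrt N) *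
            (SR * (2 + L_P) / (SP - 1)) * ((1-γ*SP)⁻¹ - (1-γ)⁻¹) :=
        add_le_add le_rfl hBle
    _ = 1 / (1 - γ) * (M_R + L_R * Real.sqrt (Fintype.card U)) / Real.sqrt N
        + ((Real.sqrt (Fintype.card X) + Real.sqrt (Fintype.card U)) / Real.sqrt N) *
            (SR * (2 + L_P) / (SP - 1)) *
            (1 / (1 - γ * SP) - 1 / (1 - γ)) := by
        rw [hfirst, one_div, one_div]
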